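/- arXiv:1507.00648 — 7 statements merged into one kernel-verified Lean document; each statement's English description precedes it below -/
import Mathlib

section
/- Let G = (V,E) be a finite simple undirected graph with edge weights w : E → {0,1}, let η be the total number of 1-edges of G, and let α > 0. Suppose T is a subtree of G (a connected acyclic subgraph of G) on at least two vertices whose set L of leaves (vertices of degree 1 in T) satisfies Σ_{v ∈ L} W_G(v) ≥ α·η. Then there exists a nonempty set S ⊆ V such that G[S] is connected and w(δ(S)) ≥ α·η/4. -/
namespace CMCPaper

variable {V : Type*}

/-- Set of edges of `G` with exactly one endpoint in `S`. -/
def cutSet (G : SimpleGraph V) (S : Set V) : Set (Sym2 V) :=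
  {e | e ∈ G.edgeSet ∧ ∃ u v, e = s(u, v) ∧ u ∈ S ∧ v ∉ S}

/-- Weight of the cut `δ(S)`. -/
noncomputable def cutWeight (G : SimpleGraph V) (w : Sym2 V → ℕ) (S : Set V) : ℕ :=
  ∑ᶠ e ∈ cutSet G S, w e

/-- Total weight of all edges of `G` (the number of 1-edges, for 0/1 weights). -/
noncomputable def totalWeight (G : SimpleGraph V) (w : Sym2 V → ℕ) : ℕ :=
  ∑ᶠ e ∈ G.edgeSet, w e

/-- `W_G(v)`: total weight of edges of `G` incident to `v`. -/
noncomputable def vertexWeight (G : SimpleGraph V) (w : Sym2 V → ℕ) (v : V) : ℕ :=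
  ∑ᶠ e ∈ {e ∈ G.edgeSet | v ∈ e}, w e

/-- `G` contains no path on three (distinct) vertices all of degree 2. -/
def NoDeg2Path3 (G : SimpleGraph V) : Prop :=
  ¬ ∃ u v w : V, u ≠ w ∧ G.Adj u v ∧ G.Adj v w ∧
      (G.neighborSet u).ncard = 2 ∧ (G.neighborSet v).ncard = 2 ∧
      (G.neighborSet w).ncard = 2


open SimpleGraph

lemma internal_two_neighbors {W : Type*} {K : SimpleGraph W} :
    ∀ {x y : W} (p : K.Walk x y), p.IsPath → ∀ v ∈ p.support, v ≠ x → v ≠ y →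
      ∃ a b, a ≠ b ∧ K.Adj v a ∧ K.Adj v b := by
  intro x y p
  induction p with
  | nil => intro _ v hv hx _; simp at hv; exact absurd hv hx
  | @cons x c y h q ih =>
    intro hp v hv hx hy
    rw [SimpleGraph.Walk.support_cons, List.mem_cons] at hv
    rw [SimpleGraph.Walk.cons_isPath_iff] at hp
    rcases hv with rfl | hv
    · exact absurd rfl hx
    rcases eq_or_ne v c with rfl | hvc
    · cases q with
      | nil => exact absurd rfl hy
      | @cons _ d _ h' q' =>
        refine ⟨x, d, ?_, h.symm, h'⟩
        intro hxd
        have hd : d ∈ (SimpleGraph.Walk.cons h' q').support := by simp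
        exact hp.2 (hxd.symm ▸ hd)
    · exact ih hp.1 v hv hvc hy

lemma reachable_induce_of_walk {W : Type*} {K : SimpleGraph W} {S : Set W} :
    ∀ {a b : W} (p : K.Walk a b) (ha : a ∈ S) (hb : b ∈ S),
      (∀ v ∈ p.support, v ∈ S) → (K.induce S).Reachable ⟨a, ha⟩ ⟨b, hb⟩ := by
  intro a b p
  induction p with
  | nil => intro ha hb _; rfl
  | @cons a c b h q ih =>
    intro ha hb hsupp
    have hc : c ∈ S := hsupp c (by simp)
    have hadj : (K.induce S).Adj ⟨a, ha⟩ ⟨c, hc⟩ := by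
      simp [SimpleGraph.comap, h]
    exact hadj.reachable.trans (ih hc hb fun v hv => hsupp v (by simp [hv]))

lemma induce_connected_of_pendant {V : Type*} {G : SimpleGraph V} {T : G.Subgraph}
    (hT : T.coe.Connected) (S : Set V) (hSsub : S ⊆ T.verts) (hS : S.Nonempty)
    (hdeg : ∀ v ∈ T.verts, v ∉ S → ∀ a b, T.Adj v a → T.Adj v b → a = b) :
    (G.induce S).Connected := by
  classical
  have : Nonempty ↥S := hS.to_subtype
  rw [SimpleGraph.connected_iff]
  refine ⟨fun x y => ?_, this⟩
  obtain ⟨x, hx⟩ := x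
  obtain ⟨y, hy⟩ := y
  obtain ⟨p0⟩ := hT.preconnected ⟨x, hSsub hx⟩ ⟨y, hSsub hy⟩
  have hpath : p0.bypass.IsPath := p0.bypass_isPath
  -- support of the bypass path is in S
  have hsupp : ∀ v ∈ p0.bypass.support, (v : V) ∈ S := by
    intro v hv
    by_contra hvS
    rcases eq_or_ne v ⟨x, hSsub hx⟩ with rfl | hvx
    · exact hvS hx
    rcases eq_or_ne v ⟨y, hSsub hy⟩ with rfl | hvy
    · exact hvS hy
    obtain ⟨a, b, hab, hva, hvb⟩ := internal_two_neighbors _ hpath v hv hvx hvy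
    exact hab (Subtype.ext_iff.mpr
      (hdeg v v.2 hvS a b hva hvb))
  -- map walk into G
  have pg : G.Walk x y := (p0.bypass.map T.hom)
  refine reachable_induce_of_walk (p0.bypass.map T.hom) hx hy ?_
  intro v hv
  rw [SimpleGraph.Walk.support_map, List.mem_map] at hv
  obtain ⟨u, hu, rfl⟩ := hv
  exact hsupp u hu



/-- predicate: edge `e` crosses the cut `δ(S)` -/
def crossPred {V : Type*} (S : Set V) (e : Sym2 V) : Prop :=
  ∃ u v, e = s(u, v) ∧ u ∈ S ∧ v ∉ S

lemma crossPred_iff {V : Type*} {u b : V} (S : Set V) :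
    crossPred S s(u, b) ↔ ((u ∈ S ∧ b ∉ S) ∨ (b ∈ S ∧ u ∉ S)) := by
  constructor
  · rintro ⟨x, y, hxy, hx, hy⟩
    rw [Sym2.eq_iff] at hxy
    rcases hxy with ⟨rfl, rfl⟩ | ⟨rfl, rfl⟩
    · exact Or.inl ⟨hx, hy⟩
    · exact Or.inr ⟨hx, hy⟩
  · rintro (⟨h1, h2⟩ | ⟨h1, h2⟩)
    · exact ⟨u, b, rfl, h1, h2⟩
    · exact ⟨b, u, Sym2.eq_swap, h1, h2⟩

lemma crossPred_toggle {V : Type*} [DecidableEq V] {u b : V} (hub : u ≠ b)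
    {I : Set V} (hIu : u ∉ I) {L₁ : Finset V} (hu : u ∉ L₁) :
    (crossPred (I ∪ ↑(insert u L₁)) s(u, b) ↔ ¬ crossPred (I ∪ ↑L₁) s(u, b)) := by
  rw [crossPred_iff, crossPred_iff]
  have h1 : u ∈ I ∪ ↑(insert u L₁) := Or.inr (by simp)
  have h2 : u ∉ I ∪ (↑L₁ : Set V) := by
    rintro (h | h)
    · exact hIu h
    · exact hu (by simpa using h)
  have h3 : b ∈ I ∪ ↑(insert u L₁) ↔ b ∈ I ∪ (↑L₁ : Set V) := by
    simp only [Set.mem_union, Finset.coe_insert, Set.mem_insert_iff, Finset.mem_coe]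
    constructor
    · rintro (h | (h | h))
      · exact Or.inl h
      · exact absurd h.symm hub
      · exact Or.inr h
    · rintro (h | h)
      · exact Or.inl h
      · exact Or.inr (Or.inr h)
  by_cases hb : b ∈ I ∪ (↑L₁ : Set V) <;> simp [h1, h2, h3, hb, hub.symm]

open Classical in
lemma powerset_sum_toggle {V : Type*} [DecidableEq V] (Lf : Finset V) {u : V}
    (hu : u ∈ Lf) {b : V} (hub : u ≠ b) (I : Set V) (hIu : u ∉ I) (c : ℕ) :
    ∑ L₁ ∈ Lf.powerset, (if crossPred (I ∪ ↑L₁) s(u, b) then c else 0)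
      = 2 ^ (Lf.card - 1) * c := by
  rw [← Finset.insert_erase hu,
    Finset.sum_powerset_insert (Finset.notMem_erase u Lf), ← Finset.sum_add_distrib]
  have key : ∀ L₁ ∈ (Lf.erase u).powerset,
      ((if crossPred (I ∪ ↑L₁) s(u, b) then c else 0)
        + (if crossPred (I ∪ ↑(insert u L₁)) s(u, b) then c else 0)) = c := by
    intro L₁ hL₁
    have hu' : u ∉ L₁ := fun h => Finset.notMem_erase u Lf (Finset.mem_powerset.1 hL₁ h)
    have ht := crossPred_toggle hub hIu hu'
    by_cases hc : crossPred (I ∪ (↑L₁ : Set V)) s(u, b)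
    · rw [if_pos hc, if_neg (fun h => (ht.mp h) hc)]
      simp
    · rw [if_neg hc, if_pos (ht.mpr hc)]
      simp
  rw [Finset.sum_congr rfl key, Finset.sum_const, Finset.card_powerset,
    Finset.card_erase_of_mem hu, smul_eq_mul, Finset.insert_erase hu]


/-- If `T` is a subtree of `G` on at least two vertices whose leaves `L`
satisfy `Σ_{v ∈ L} W_G(v) ≥ α·η` (an `α`-thick tree), then there is a nonempty `S` with
`G[S]` connected and `w(δ(S)) ≥ α·η/4`. -/
theorem thick_tree_gives_cut {V : Type*} [Fintype V]
    (G : SimpleGraph V) (w : Sym2 V → ℕ)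
    (hw : ∀ e ∈ G.edgeSet, w e ≤ 1)
    (η : ℕ) (hη : η = totalWeight G w)
    (α : ℝ) (hα : 0 < α)
    (T : G.Subgraph) (hTree : T.coe.IsTree) (hT2 : 2 ≤ T.verts.ncard)
    (hthick : α * η ≤
      ↑(∑ᶠ v ∈ {v : V | v ∈ T.verts ∧ (T.neighborSet v).ncard = 1}, vertexWeight G w v)) :
    ∃ S : Set V, S.Nonempty ∧ (G.induce S).Connected ∧
      α * η / 4 ≤ (cutWeight G w S : ℝ) := by
  classical
  rcases Nat.eq_zero_or_pos η with hη0 | hη1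
  · -- trivial case η = 0
    have hTne : T.verts.Nonempty := by
      rcases Set.eq_empty_or_nonempty T.verts with h | h
      · rw [h, Set.ncard_empty] at hT2; omega
      · exact h
    obtain ⟨v, hv⟩ := hTne
    refine ⟨{v}, ⟨v, rfl⟩, ?_, ?_⟩
    · rw [SimpleGraph.connected_iff]
      refine ⟨?_, ⟨⟨v, rfl⟩⟩⟩
      rintro ⟨a, ha⟩ ⟨b, hb⟩
      rw [Set.mem_singleton_iff] at ha hb
      subst ha; subst hb
      rfl
    · rw [hη0]
      simp
  -- main case
  set Lset : Set V := {v : V | v ∈ T.verts ∧ (T.neighborSet v).ncard = 1} with hLsetdef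
  set I : Set V := T.verts \ Lset with hIdef
  set Lfin : Finset V := (Set.toFinite Lset).toFinset with hLfin
  set Efin : Finset (Sym2 V) := (Set.toFinite G.edgeSet).toFinset with hEfin
  have hcutW : ∀ S : Set V, cutWeight G w S = ∑ e ∈ Efin, if crossPred S e then w e else 0 := by
    intro S
    have h1 : cutSet G S = ↑(Efin.filter (fun e => crossPred S e)) := by
      rw [hEfin]
      ext e
      rw [Finset.mem_coe, Finset.mem_filter, Set.Finite.mem_toFinset]
      rfl
    rw [cutWeight, h1, finsum_mem_coe_finset, Finset.sum_filter]
  have hvW : ∀ v, vertexWeight G w v = ∑ e ∈ Efin, if v ∈ e then w e else 0 := by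
    intro v
    have h1 : {e ∈ G.edgeSet | v ∈ e} = ↑(Efin.filter (fun e => v ∈ e)) := by
      rw [hEfin]
      ext e
      rw [Finset.mem_coe, Finset.mem_filter, Set.Finite.mem_toFinset]
      rfl
    rw [vertexWeight, h1, finsum_mem_coe_finset, Finset.sum_filter]
  have hWsum : (∑ᶠ v ∈ Lset, vertexWeight G w v) = ∑ v ∈ Lfin, vertexWeight G w v := by
    have h2 := finsum_mem_coe_finset (s := (Set.toFinite Lset).toFinset)
      (f := vertexWeight G w) (M := ℕ)
    rw [Set.Finite.coe_toFinset] at h2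
    rw [hLfin]
    exact h2
  -- double counting
  set M : ℕ := ∑ e ∈ Efin.filter (fun e => ∃ v, v ∈ e ∧ v ∈ Lset), w e with hM
  have hdouble : ∑ v ∈ Lfin, vertexWeight G w v ≤ 2 * M := by
    calc ∑ v ∈ Lfin, vertexWeight G w v
        = ∑ v ∈ Lfin, ∑ e ∈ Efin, if v ∈ e then w e else 0 :=
          Finset.sum_congr rfl (fun v _ => hvW v)
      _ = ∑ e ∈ Efin, ∑ v ∈ Lfin, if v ∈ e then w e else 0 := Finset.sum_comm
      _ ≤ ∑ e ∈ Efin, (if (∃ v, v ∈ e ∧ v ∈ Lset) then 2 * w e else 0) := by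
          refine Finset.sum_le_sum (fun e he => ?_)
          by_cases hex : ∃ v, v ∈ e ∧ v ∈ Lset
          · rw [if_pos hex]
            obtain ⟨a, ha, haL⟩ := hex
            obtain ⟨b, rfl⟩ := Sym2.mem_iff_exists.mp ha
            have hsub : Lfin.filter (· ∈ s(a, b)) ⊆ {a, b} := by
              intro v hv
              rw [Finset.mem_filter] at hv
              have := hv.2
              rw [Sym2.mem_iff] at this
              simpa using this
            calc ∑ v ∈ Lfin, (if v ∈ s(a, b) then w s(a, b) else 0)
                = ∑ v ∈ Lfin.filter (· ∈ s(a, b)), w s(a, b) := (Finset.sum_filter _ _).symm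
              _ = (Lfin.filter (· ∈ s(a, b))).card * w s(a, b) := by
                  rw [Finset.sum_const, smul_eq_mul]
              _ ≤ 2 * w s(a, b) := by
                  have h2 : (Lfin.filter (· ∈ s(a, b))).card ≤ 2 := by
                    calc (Lfin.filter (· ∈ s(a, b))).card ≤ ({a, b} : Finset V).card :=
                          Finset.card_le_card hsub
                      _ ≤ 2 := Finset.card_insert_le a {b} |>.trans (by simp)
                  exact Nat.mul_le_mul_right _ h2
          · rw [if_neg hex]
            refine le_of_eq (Finset.sum_eq_zero ?_)
            intro v hv
            rw [if_neg]
            intro hve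
            exact hex ⟨v, hve, by rwa [hLfin, Set.Finite.mem_toFinset] at hv⟩
      _ = 2 * M := by
          rw [hM, ← Finset.sum_filter, Finset.mul_sum]
  rw [hWsum] at hthick
  have hαη : (0 : ℝ) < α * η := by
    have : (0 : ℝ) < (η : ℝ) := by exact_mod_cast hη1
    positivity
  have hW1 : 1 ≤ ∑ v ∈ Lfin, vertexWeight G w v := by
    by_contra h
    push_neg at h
    have h0 : ∑ v ∈ Lfin, vertexWeight G w v = 0 := by omega
    rw [h0] at hthick
    simp at hthick
    linarith
  have hM1 : 1 ≤ M := by omega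
  have hLne : Lfin.Nonempty := by
    have hEL : (Efin.filter (fun e => ∃ v, v ∈ e ∧ v ∈ Lset)).Nonempty := by
      by_contra h
      rw [Finset.not_nonempty_iff_eq_empty] at h
      rw [h, Finset.sum_empty] at hM
      omega
    obtain ⟨e, he⟩ := hEL
    rw [Finset.mem_filter] at he
    obtain ⟨v, _, hvL⟩ := he.2
    exact ⟨v, by rw [hLfin, Set.Finite.mem_toFinset]; exact hvL⟩
  -- averaging over subsets of the leaves
  have havg : 2 ^ (Lfin.card - 1) * M ≤
      ∑ L₁ ∈ Lfin.powerset, ∑ e ∈ Efin, (if crossPred (I ∪ ↑L₁) e then w e else 0) := by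
    rw [Finset.sum_comm]
    calc 2 ^ (Lfin.card - 1) * M
        = ∑ e ∈ Efin.filter (fun e => ∃ v, v ∈ e ∧ v ∈ Lset), 2 ^ (Lfin.card - 1) * w e := by
          rw [hM, Finset.mul_sum]
      _ = ∑ e ∈ Efin.filter (fun e => ∃ v, v ∈ e ∧ v ∈ Lset),
            ∑ L₁ ∈ Lfin.powerset, (if crossPred (I ∪ ↑L₁) e then w e else 0) := by
          refine Finset.sum_congr rfl (fun e he => ?_)
          rw [Finset.mem_filter] at he
          obtain ⟨heE, u, hue, huL⟩ := he
          obtain ⟨b, rfl⟩ := Sym2.mem_iff_exists.mp hue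
          have heG : s(u, b) ∈ G.edgeSet := by
            rwa [hEfin, Set.Finite.mem_toFinset] at heE
          have hub : u ≠ b := by
            have hd := G.not_isDiag_of_mem_edgeSet heG
            simpa [Sym2.isDiag_iff_proj_eq] using hd
          have huLf : u ∈ Lfin := by rw [hLfin, Set.Finite.mem_toFinset]; exact huL
          have hIu : u ∉ I := fun h => h.2 huL
          exact (powerset_sum_toggle Lfin huLf hub I hIu (w s(u, b))).symm
      _ ≤ ∑ e ∈ Efin, ∑ L₁ ∈ Lfin.powerset, (if crossPred (I ∪ ↑L₁) e then w e else 0) :=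
          Finset.sum_le_sum_of_subset (Finset.filter_subset _ _)
  have hmax : ∃ L₁ ∈ Lfin.powerset,
      M ≤ 2 * ∑ e ∈ Efin, (if crossPred (I ∪ ↑L₁) e then w e else 0) := by
    apply Finset.exists_le_of_sum_le ⟨∅, Finset.empty_mem_powerset _⟩
    have hk : 1 ≤ Lfin.card := Finset.card_pos.mpr hLne
    calc ∑ _L₁ ∈ Lfin.powerset, M = 2 ^ Lfin.card * M := by
          rw [Finset.sum_const, Finset.card_powerset, smul_eq_mul]
      _ = 2 * (2 ^ (Lfin.card - 1) * M) := by
          rw [← mul_assoc, ← pow_succ', Nat.sub_add_cancel hk]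
      _ ≤ 2 * ∑ L₁ ∈ Lfin.powerset, ∑ e ∈ Efin, (if crossPred (I ∪ ↑L₁) e then w e else 0) :=
          Nat.mul_le_mul_left 2 havg
      _ = ∑ L₁ ∈ Lfin.powerset, 2 * ∑ e ∈ Efin, (if crossPred (I ∪ ↑L₁) e then w e else 0) :=
          Finset.mul_sum _ _ _
  obtain ⟨L₁, hL₁P, hL₁⟩ := hmax
  set S : Set V := I ∪ ↑L₁ with hSdef
  have hcut : cutWeight G w S = ∑ e ∈ Efin, if crossPred S e then w e else 0 := hcutW S
  have hcut1 : M ≤ 2 * cutWeight G w S := by rw [hcut]; exact hL₁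
  have hsub1 : (↑L₁ : Set V) ⊆ Lset := by
    intro v hv
    have hvf : v ∈ Lfin := Finset.mem_powerset.1 hL₁P hv
    rwa [hLfin, Set.Finite.mem_toFinset] at hvf
  have hSsub : S ⊆ T.verts := by
    rintro v (hv | hv)
    · exact hv.1
    · exact (hsub1 hv).1
  have hSne : S.Nonempty := by
    rcases Set.eq_empty_or_nonempty S with h | h
    · exfalso
      have hz : ∀ e ∈ Efin, (if crossPred S e then w e else 0) = 0 := by
        intro e _
        rw [if_neg]
        rintro ⟨u, v, _, hu, _⟩
        rw [h] at hu
        exact hu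
      have h0 : cutWeight G w S = 0 := by rw [hcut]; exact Finset.sum_eq_zero hz
      omega
    · exact h
  refine ⟨S, hSne, ?_, ?_⟩
  · apply induce_connected_of_pendant hTree.isConnected S hSsub hSne
    intro v hvT hvS a b hva hvb
    have hvL : v ∈ Lset := by
      by_contra h
      exact hvS (Or.inl ⟨hvT, h⟩)
    obtain ⟨c, hc⟩ := Set.ncard_eq_one.mp hvL.2
    have ha : a ∈ T.neighborSet v := hva
    have hb : b ∈ T.neighborSet v := hvb
    rw [hc, Set.mem_singleton_iff] at ha hb
    rw [ha, hb]
  · have hn : ∑ v ∈ Lfin, vertexWeight G w v ≤ 4 * cutWeight G w S := by omega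
    have h4 : α * η ≤ 4 * (cutWeight G w S : ℝ) := by
      calc α * η ≤ ((∑ v ∈ Lfin, vertexWeight G w v : ℕ) : ℝ) := hthick
        _ ≤ 4 * (cutWeight G w S : ℝ) := by exact_mod_cast hn
    linarith

end CMCPaper
end

section
/- Let G = (V,E) be a connected finite simple undirected graph on n ≥ 2 vertices that contains no path on three vertices u–v–w with deg_G(u) = deg_G(v) = deg_G(w) = 2. Then G has a spanning tree with at least n/14 leaves. -/
namespace CMCPaper

variable {V : Type*}

section Auxiliary

open SimpleGraph Finset

private lemma reach_lift {H K : SimpleGraph V}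
    (h : ∀ a b, H.Adj a b → K.Reachable a b) :
    ∀ {x y : V}, H.Reachable x y → K.Reachable x y := by
  intro x y hr
  obtain ⟨p⟩ := hr
  induction p with
  | nil => exact Reachable.refl _
  | cons ha _ ih => exact (h _ _ ha).trans ih

private lemma exists_adj_of_reachable {H : SimpleGraph V} {x c : V}
    (h : H.Reachable x c) (hne : x ≠ c) : ∃ z, H.Adj z c := by
  obtain ⟨p⟩ := h
  revert hne
  induction p with
  | nil => intro h; exact absurd rfl h
  | @cons a b w ha q ih =>
      intro _
      by_cases hb : b = w
      · subst hb; exact ⟨a, ha⟩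
      · exact ih hb

private lemma exists_penult {T : SimpleGraph V} :
    ∀ {x v : V} (p : T.Walk x v), p.IsPath → x ≠ v →
      ∃ c, T.Adj c v ∧ s(c, v) ∈ p.edges ∧
        (T.deleteEdges {s(c, v)}).Reachable x c := by
  intro x v p
  induction p with
  | nil => intro _ h; exact absurd rfl h
  | @cons a b w ha q ih =>
      intro hp _
      by_cases hb : b = w
      · subst hb
        refine ⟨a, ha, by simp, Reachable.refl _⟩
      · obtain ⟨c, hcv, hce, hre⟩ := ih hp.of_cons hb
        have hne : s(a, b) ≠ s(c, w) := by
          intro h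
          have : s(a, b) ∈ q.edges := h ▸ hce
          exact ((Walk.cons_isPath_iff ha q).1 hp).2 (q.fst_mem_support_of_mem_edges this)
        refine ⟨c, hcv, by simp [hce], ?_⟩
        have hadj : (T.deleteEdges {s(c, w)}).Adj a b := by
          simp only [deleteEdges_adj, Set.mem_singleton_iff]
          exact ⟨ha, hne⟩
        exact hadj.reachable.trans hre


private lemma exists_spanning_tree [Fintype V] (G : SimpleGraph V) (h : G.Connected) :
    ∃ T, T ≤ G ∧ T.IsTree := by
  classical
  obtain ⟨H, hHmem, hmin⟩ := Finset.exists_min_image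
    (univ.filter fun H : SimpleGraph V => H ≤ G ∧ H.Connected)
    (fun H => H.edgeFinset.card) ⟨G, by simp [h]⟩
  simp only [mem_filter, mem_univ, true_and] at hHmem
  obtain ⟨hHG, hHconn⟩ := hHmem
  refine ⟨H, hHG, hHconn, ?_⟩
  by_contra hac
  simp only [IsAcyclic, not_forall, not_not] at hac
  obtain ⟨u, p, hp⟩ := hac
  have hpe : p.edges ≠ [] := by
    have h3 := hp.three_le_length
    intro he
    rw [← Walk.length_edges, he] at h3
    simp at h3
  obtain ⟨e, he⟩ := List.exists_mem_of_ne_nil _ hpe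
  induction e using Sym2.ind with
  | _ a b =>
    obtain ⟨hab, hre⟩ := (adj_and_reachable_delete_edges_iff_exists_cycle).2 ⟨u, p, hp, he⟩
    set H' := H.deleteEdges {s(a, b)} with hH'
    have hre' : H'.Reachable a b := hre
    have hlift : ∀ c d, H.Adj c d → H'.Reachable c d := by
      intro c d hcd
      by_cases hcd' : s(c, d) = s(a, b)
      · rcases Sym2.eq_iff.1 hcd' with ⟨rfl, rfl⟩ | ⟨rfl, rfl⟩
        · exact hre'
        · exact hre'.symm
      · exact (SimpleGraph.deleteEdges_adj.2 ⟨hcd, by simpa using hcd'⟩).reachable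
    have hH'conn : H'.Connected := by
      have : Nonempty V := hHconn.nonempty
      exact ⟨fun c d => reach_lift hlift (hHconn.preconnected c d)⟩
    have hchart : H'.edgeFinset.card < H.edgeFinset.card := by
      apply Finset.card_lt_card
      rw [Finset.ssubset_iff_of_subset (by
        simp only [edgeFinset_subset_edgeFinset]; exact deleteEdges_le _)]
      refine ⟨s(a, b), ?_, ?_⟩
      · simpa using hab
      · simp [hH', edgeSet_deleteEdges]
    have := hmin H' (by
      simp only [mem_filter, mem_univ, true_and]
      exact ⟨le_trans (deleteEdges_le _) hHG, hH'conn⟩)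
    exact (Nat.not_lt.2 this) (by convert hchart)

private lemma ncard_edgeSet [Fintype V] (H : SimpleGraph V) [Fintype H.edgeSet]
    [DecidableRel H.Adj] : H.edgeSet.ncard = H.edgeFinset.card := by
  rw [Set.ncard_eq_toFinset_card']
  exact congrArg Finset.card (Set.toFinset_congr rfl)

private lemma isTree_of_connected_of_card [Fintype V] (H : SimpleGraph V)
    (hH : H.Connected) (hcard : H.edgeSet.ncard + 1 = Fintype.card V) : H.IsTree := by
  classical
  obtain ⟨T, hTH, hT⟩ := exists_spanning_tree H hH
  have h1 : T.edgeFinset.card + 1 = Fintype.card V := hT.card_edgeFinset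
  have h2 : T.edgeFinset ⊆ H.edgeFinset := by
    simp only [edgeFinset_subset_edgeFinset]; exact hTH
  have h4 : H.edgeSet.ncard = H.edgeFinset.card := ncard_edgeSet H
  have h3 : T.edgeFinset = H.edgeFinset := Finset.eq_of_subset_of_card_le h2 (by omega)
  have : T = H := by
    rw [← edgeSet_inj]
    have := congrArg (fun s : Finset (Sym2 V) => (s : Set (Sym2 V))) h3
    simpa [Set.coe_toFinset, edgeFinset] using this
  exact this ▸ hT


private def swapT (T : SimpleGraph V) (x v c : V) : SimpleGraph V :=
  SimpleGraph.fromEdgeSet (insert s(x, v) (T.edgeSet \ {s(c, v)}))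

variable {T : SimpleGraph V} {x v c : V}

private lemma swap_adj (hxv : x ≠ v) {a b : V} :
    (swapT T x v c).Adj a b ↔ s(a, b) = s(x, v) ∨ (T.Adj a b ∧ s(a, b) ≠ s(c, v)) := by
  rw [swapT, fromEdgeSet_adj]
  constructor
  · rintro ⟨h, hab⟩
    rcases Set.mem_insert_iff.1 h with h | h
    · exact Or.inl h
    · exact Or.inr ⟨T.mem_edgeSet.1 h.1, h.2⟩
  · rintro (h | ⟨h1, h2⟩)
    · refine ⟨Set.mem_insert_iff.2 (Or.inl h), ?_⟩
      rintro rfl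
      rcases Sym2.eq_iff.1 h with ⟨rfl, rfl⟩ | ⟨rfl, rfl⟩ <;> exact hxv rfl
    · exact ⟨Set.mem_insert_iff.2 (Or.inr ⟨h1, h2⟩), h1.ne⟩

private lemma swap_edgeSet (hxv : x ≠ v) :
    (swapT T x v c).edgeSet = insert s(x, v) (T.edgeSet \ {s(c, v)}) := by
  rw [swapT, edgeSet_fromEdgeSet, _root_.sdiff_eq_self_iff_disjoint]
  rw [Set.disjoint_right]
  rintro e he'
  rcases Set.mem_insert_iff.1 he' with rfl | ⟨he, -⟩
  · simpa using hxv
  · exact T.not_isDiag_of_mem_edgeSet he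

private lemma swap_ncard_edgeSet [Fintype V] (hxv : x ≠ v) (hnadj : ¬T.Adj x v)
    (hcv : T.Adj c v) :
    (swapT T x v c).edgeSet.ncard = T.edgeSet.ncard := by
  rw [swap_edgeSet hxv]
  have h1 : s(x, v) ∉ T.edgeSet \ {s(c, v)} := by
    intro h
    exact hnadj (T.mem_edgeSet.1 h.1)
  rw [Set.ncard_insert_of_notMem h1 ((T.edgeSet.toFinite).diff)]
  rw [Set.ncard_diff_singleton_add_one (T.mem_edgeSet.2 hcv) T.edgeSet.toFinite]

private lemma swap_le {G : SimpleGraph V} (hxv : x ≠ v) (hTG : T ≤ G) (hGxv : G.Adj x v) :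
    swapT T x v c ≤ G := by
  rw [← edgeSet_subset_edgeSet, swap_edgeSet hxv]
  rintro e (rfl | ⟨he, -⟩)
  · exact G.mem_edgeSet.2 hGxv
  · exact edgeSet_mono hTG he

private lemma swap_connected (hT : T.Connected) (hxv : x ≠ v) (hcv : T.Adj c v)
    (hreach : (T.deleteEdges {s(c, v)}).Reachable x c) :
    (swapT T x v c).Connected := by
  have hle : T.deleteEdges {s(c, v)} ≤ swapT T x v c := by
    intro a b hab
    rw [deleteEdges_adj] at hab
    exact (swap_adj hxv).2 (Or.inr ⟨hab.1, by simpa using hab.2⟩)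
  have hxv' : (swapT T x v c).Adj x v := (swap_adj hxv).2 (Or.inl rfl)
  have hxc : (swapT T x v c).Reachable x c := hreach.mono hle
  have hcv' : (swapT T x v c).Reachable c v := hxc.symm.trans hxv'.reachable
  have hlift : ∀ a b, T.Adj a b → (swapT T x v c).Reachable a b := by
    intro a b hab
    by_cases h : s(a, b) = s(c, v)
    · rcases Sym2.eq_iff.1 h with ⟨rfl, rfl⟩ | ⟨rfl, rfl⟩
      · exact hcv'
      · exact hcv'.symm
    · exact ((swap_adj hxv).2 (Or.inr ⟨hab, h⟩)).reachable
  have : Nonempty V := hT.nonempty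
  exact ⟨fun a b => reach_lift hlift (hT.preconnected a b)⟩

private lemma swap_isTree [Fintype V] (hT : T.IsTree) (hxv : x ≠ v) (hnadj : ¬T.Adj x v)
    (hcv : T.Adj c v) (hreach : (T.deleteEdges {s(c, v)}).Reachable x c) :
    (swapT T x v c).IsTree := by
  classical
  apply isTree_of_connected_of_card _ (swap_connected hT.isConnected hxv hcv hreach)
  rw [swap_ncard_edgeSet hxv hnadj hcv, ncard_edgeSet T]
  exact hT.card_edgeFinset

-- neighbor sets
private lemma swap_nbr_other (hxv : x ≠ v) {u : V} (hux : u ≠ x) (huv : u ≠ v) (huc : u ≠ c) :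
    (swapT T x v c).neighborSet u = T.neighborSet u := by
  ext b
  simp only [mem_neighborSet, swap_adj hxv]
  constructor
  · rintro (h | ⟨h1, -⟩)
    · rcases Sym2.eq_iff.1 h with ⟨rfl, rfl⟩ | ⟨rfl, rfl⟩
      · exact absurd rfl hux
      · exact absurd rfl huv
    · exact h1
  · intro h
    refine Or.inr ⟨h, ?_⟩
    intro he
    rcases Sym2.eq_iff.1 he with ⟨rfl, rfl⟩ | ⟨rfl, rfl⟩
    · exact huc rfl
    · exact huv rfl

private lemma swap_nbr_x (hxv : x ≠ v) (hxc : x ≠ c) :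
    (swapT T x v c).neighborSet x = insert v (T.neighborSet x) := by
  ext b
  simp only [mem_neighborSet, swap_adj hxv, Set.mem_insert_iff]
  constructor
  · rintro (h | ⟨h1, -⟩)
    · rcases Sym2.eq_iff.1 h with ⟨-, rfl⟩ | ⟨rfl, rfl⟩
      · exact Or.inl rfl
      · exact absurd rfl hxv
    · exact Or.inr h1
  · rintro (rfl | h)
    · exact Or.inl rfl
    · refine Or.inr ⟨h, ?_⟩
      intro he
      rcases Sym2.eq_iff.1 he with ⟨rfl, rfl⟩ | ⟨rfl, rfl⟩
      · exact hxc rfl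
      · exact hxv rfl

private lemma swap_nbr_c (hxv : x ≠ v) (hxc : x ≠ c) (hvc : v ≠ c) :
    (swapT T x v c).neighborSet c = T.neighborSet c \ {v} := by
  ext b
  simp only [mem_neighborSet, swap_adj hxv, Set.mem_diff, Set.mem_singleton_iff]
  constructor
  · rintro (h | ⟨h1, h2⟩)
    · rcases Sym2.eq_iff.1 h with ⟨h3, -⟩ | ⟨h3, -⟩
      · exact absurd h3 (Ne.symm hxc)
      · exact absurd h3.symm hvc
    · refine ⟨h1, ?_⟩
      rintro rfl
      exact h2 rfl
  · rintro ⟨h1, h2⟩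
    exact Or.inr ⟨h1, by
      intro he
      rcases Sym2.eq_iff.1 he with ⟨-, h4⟩ | ⟨h3, -⟩
      · exact h2 h4
      · exact hvc h3.symm⟩

private lemma swap_nbr_v (hxv : x ≠ v) (hvc : v ≠ c) :
    (swapT T x v c).neighborSet v = insert x (T.neighborSet v \ {c}) := by
  ext b
  simp only [mem_neighborSet, swap_adj hxv, Set.mem_insert_iff, Set.mem_diff,
    Set.mem_singleton_iff]
  constructor
  · rintro (h | ⟨h1, h2⟩)
    · rcases Sym2.eq_iff.1 h with ⟨h3, -⟩ | ⟨-, h4⟩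
      · exact absurd h3.symm hxv
      · exact Or.inl h4
    · refine Or.inr ⟨h1, ?_⟩
      rintro rfl
      exact h2 (Sym2.eq_swap)
  · rintro (rfl | ⟨h1, h2⟩)
    · exact Or.inl Sym2.eq_swap
    · refine Or.inr ⟨h1, ?_⟩
      intro he
      rcases Sym2.eq_iff.1 he with ⟨h3, -⟩ | ⟨-, h4⟩
      · exact hvc h3
      · exact h2 h4


private lemma lemmaA [Fintype V] {G T : SimpleGraph V} (hTG : T ≤ G) (hT : T.IsTree)
    (hmax : ∀ T' : SimpleGraph V, T' ≤ G → T'.IsTree →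
      {u | (T'.neighborSet u).ncard = 1}.ncard ≤ {u | (T.neighborSet u).ncard = 1}.ncard)
    {x v c : V} (hGxv : G.Adj x v) (hnadj : ¬T.Adj x v) (hcv : T.Adj c v)
    (hreach : (T.deleteEdges {s(c, v)}).Reachable x c)
    (hc2 : (T.neighborSet c).ncard = 2) :
    (T.neighborSet x).ncard = 1 := by
  by_contra hx1
  have hxv : x ≠ v := hGxv.ne
  have hxc : x ≠ c := fun h => hnadj (h ▸ hcv)
  have hvc : v ≠ c := hcv.ne'
  have htree := swap_isTree hT hxv hnadj hcv hreach
  have hle := swap_le (c := c) hxv hTG hGxv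
  have hsub : insert c {u | (T.neighborSet u).ncard = 1} ⊆
      {u | ((swapT T x v c).neighborSet u).ncard = 1} := by
    intro u hu
    simp only [Set.mem_setOf_eq]
    rcases Set.mem_insert_iff.1 hu with h | hu
    · rw [h, swap_nbr_c hxv hxc hvc]
      have h5 := Set.ncard_diff_singleton_add_one (show v ∈ T.neighborSet c from hcv)
        (Set.toFinite _)
      omega
    · have hu : (T.neighborSet u).ncard = 1 := hu
      have hux : u ≠ x := fun h => hx1 (h ▸ hu)
      have huc : u ≠ c := fun h => by rw [h, hc2] at hu; omega
      by_cases huv : u = v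
      · subst huv
        rw [swap_nbr_v hxv hvc]
        have hxnv : x ∉ T.neighborSet u \ {c} := fun h => hnadj h.1.symm
        rw [Set.ncard_insert_of_notMem hxnv (Set.toFinite _)]
        have h5 := Set.ncard_diff_singleton_add_one (show c ∈ T.neighborSet u from hcv.symm)
          (Set.toFinite _)
        omega
      · rw [swap_nbr_other hxv hux huv huc]
        exact hu
  have hcnot : c ∉ {u | (T.neighborSet u).ncard = 1} := by
    intro h
    have : (T.neighborSet c).ncard = 1 := h
    omega
  have h6 : {u | (T.neighborSet u).ncard = 1}.ncard + 1 ≤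
      {u | ((swapT T x v c).neighborSet u).ncard = 1}.ncard := by
    rw [← Set.ncard_insert_of_notMem hcnot (Set.toFinite _)]
    exact Set.ncard_le_ncard hsub (Set.toFinite _)
  have h7 := hmax _ hle htree
  omega

private lemma swap_leaf_ncard_eq [Fintype V] {T : SimpleGraph V} {x v c : V}
    (hxv : x ≠ v) (hnadj : ¬T.Adj x v) (hcv : T.Adj c v)
    (hc2 : (T.neighborSet c).ncard = 2) (hx1 : (T.neighborSet x).ncard = 1) :
    {u | ((swapT T x v c).neighborSet u).ncard = 1}.ncard =
      {u | (T.neighborSet u).ncard = 1}.ncard := by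
  have hxc : x ≠ c := fun h => hnadj (h ▸ hcv)
  have hvc : v ≠ c := hcv.ne'
  have hset : {u | ((swapT T x v c).neighborSet u).ncard = 1} =
      insert c ({u | (T.neighborSet u).ncard = 1} \ {x}) := by
    ext u
    simp only [Set.mem_setOf_eq, Set.mem_insert_iff, Set.mem_diff, Set.mem_singleton_iff]
    by_cases huc : u = c
    · subst huc
      have h5 := Set.ncard_diff_singleton_add_one (show v ∈ T.neighborSet u from hcv)
        (Set.toFinite _)
      rw [swap_nbr_c hxv hxc hvc]
      constructor
      · intro _; exact Or.inl rfl
      · intro _; omega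
    · by_cases hux : u = x
      · subst hux
        rw [swap_nbr_x hxv hxc]
        have hv : v ∉ T.neighborSet u := hnadj
        rw [Set.ncard_insert_of_notMem hv (Set.toFinite _), hx1]
        constructor
        · intro h; omega
        · rintro (h | ⟨-, h⟩)
          · exact absurd h huc
          · exact absurd rfl h
      · by_cases huv : u = v
        · subst huv
          rw [swap_nbr_v hxv hvc]
          have hxnv : x ∉ T.neighborSet u \ {c} := fun h => hnadj h.1.symm
          rw [Set.ncard_insert_of_notMem hxnv (Set.toFinite _)]
          have h5 := Set.ncard_diff_singleton_add_one (show c ∈ T.neighborSet u from hcv.symm)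
            (Set.toFinite _)
          constructor
          · intro h; exact Or.inr ⟨by omega, hux⟩
          · rintro (h | ⟨h, -⟩)
            · exact absurd h huc
            · omega
        · rw [swap_nbr_other hxv hux huv huc]
          constructor
          · intro h; exact Or.inr ⟨h, hux⟩
          · rintro (h | ⟨h, -⟩)
            · exact absurd h huc
            · exact h
  rw [hset]
  have hxmem : x ∈ {u | (T.neighborSet u).ncard = 1} := hx1
  have hcnot : c ∉ {u | (T.neighborSet u).ncard = 1} \ {x} := fun h => by
    have : (T.neighborSet c).ncard = 1 := h.1
    omega
  rw [Set.ncard_insert_of_notMem hcnot (Set.toFinite _)]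
  have h6 := Set.ncard_diff_singleton_add_one hxmem (Set.toFinite _)
  omega

private lemma charge_leaf [Fintype V] {G T : SimpleGraph V} (hTG : T ≤ G) (hT : T.IsTree)
    (hmax : ∀ T' : SimpleGraph V, T' ≤ G → T'.IsTree →
      {u | (T'.neighborSet u).ncard = 1}.ncard ≤ {u | (T.neighborSet u).ncard = 1}.ncard)
    {v x : V} (hGvx : G.Adj v x) (hnT : ¬T.Adj v x)
    (hInt : ∀ w, T.Adj v w → (T.neighborSet w).ncard = 2) :
    (T.neighborSet x).ncard = 1 := by
  classical
  have hxvne : x ≠ v := hGvx.ne'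
  obtain ⟨p⟩ := hT.isConnected.preconnected x v
  obtain ⟨c, hcv, -, hre⟩ := exists_penult p.bypass p.bypass_isPath hxvne
  exact lemmaA hTG hT hmax hGvx.symm (fun h => hnT h.symm) hcv hre (hInt c hcv.symm)

private lemma charge_inj [Fintype V] {G T : SimpleGraph V} (hTG : T ≤ G) (hT : T.IsTree)
    (hmax : ∀ T' : SimpleGraph V, T' ≤ G → T'.IsTree →
      {u | (T'.neighborSet u).ncard = 1}.ncard ≤ {u | (T.neighborSet u).ncard = 1}.ncard)
    {v v' x : V} (hvv' : v ≠ v')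
    (hv2 : (T.neighborSet v).ncard = 2)
    (hInt : ∀ w, T.Adj v w → (T.neighborSet w).ncard = 2)
    (hInt' : ∀ w, T.Adj v' w → (T.neighborSet w).ncard = 2)
    (hGvx : G.Adj v x) (hnT : ¬T.Adj v x) (hGvx' : G.Adj v' x) (hnT' : ¬T.Adj v' x) :
    False := by
  classical
  have hx1 : (T.neighborSet x).ncard = 1 := charge_leaf hTG hT hmax hGvx hnT hInt
  have hxv : x ≠ v := hGvx.ne'
  obtain ⟨p⟩ := hT.isConnected.preconnected x v
  obtain ⟨c, hcv, -, hre⟩ := exists_penult p.bypass p.bypass_isPath hxv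
  have hc2 : (T.neighborSet c).ncard = 2 := hInt c hcv.symm
  have hnadj : ¬T.Adj x v := fun h => hnT h.symm
  have hxc : x ≠ c := fun h => hnadj (h ▸ hcv)
  have hvc : v ≠ c := hcv.ne'
  have hxv' : x ≠ v' := hGvx'.ne'
  have hT1 : (swapT T x v c).IsTree := swap_isTree hT hxv hnadj hcv hre
  have hT1G : swapT T x v c ≤ G := swap_le hxv hTG hGvx.symm
  have hmax1 : ∀ T'' : SimpleGraph V, T'' ≤ G → T''.IsTree →
      {u | (T''.neighborSet u).ncard = 1}.ncard ≤
        {u | ((swapT T x v c).neighborSet u).ncard = 1}.ncard := by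
    intro T'' h1 h2
    rw [swap_leaf_ncard_eq hxv hnadj hcv hc2 hx1]
    exact hmax T'' h1 h2
  have hnadj1 : ¬(swapT T x v c).Adj x v' := by
    rw [swap_adj hxv]
    rintro (h | ⟨h1, -⟩)
    · rcases Sym2.eq_iff.1 h with ⟨-, h4⟩ | ⟨h3, -⟩
      · exact hvv' h4.symm
      · exact hGvx.ne h3.symm
    · exact hnT' h1.symm
  have hnd1x : ((swapT T x v c).neighborSet x).ncard = 2 := by
    rw [swap_nbr_x hxv hxc]
    have hv : v ∉ T.neighborSet x := hnadj
    rw [Set.ncard_insert_of_notMem hv (Set.toFinite _), hx1]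
  obtain ⟨q⟩ := hT1.isConnected.preconnected x v'
  obtain ⟨c'', hc''v', -, hre''⟩ := exists_penult q.bypass q.bypass_isPath hxv'
  have hc''T : T.Adj c'' v' ∧ s(c'', v') ≠ s(c, v) := by
    have h := hc''v'
    rw [swap_adj hxv] at h
    rcases h with h | h
    · rcases Sym2.eq_iff.1 h with ⟨-, h4⟩ | ⟨-, h4⟩
      · exact absurd h4.symm hvv'
      · exact absurd h4.symm hxv'
    · exact h
  have hc''2 : (T.neighborSet c'').ncard = 2 := hInt' c'' hc''T.1.symm
  have hxc'' : x ≠ c'' := fun h => by rw [← h, hx1] at hc''2; omega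
  have hc''ne_c : c'' ≠ c := by
    intro h
    have hadjcv' : T.Adj c v' := h ▸ hc''T.1
    have hpair : ({v, v'} : Set V) ⊆ T.neighborSet c := by
      rintro z (rfl | rfl)
      · exact hcv
      · exact hadjcv'
    have hEq : ({v, v'} : Set V) = T.neighborSet c :=
      Set.eq_of_subset_of_ncard_le hpair
        (by rw [hc2, Set.ncard_pair hvv']) (Set.toFinite _)
    have hN1 : (swapT T x v c).neighborSet c = {v'} := by
      rw [swap_nbr_c hxv hxc hvc, ← hEq, Set.pair_diff_left hvv']
    rw [h] at hre'' hxc''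
    obtain ⟨z, hz⟩ := exists_adj_of_reachable hre'' hxc''
    rw [deleteEdges_adj] at hz
    have hzmem : z ∈ (swapT T x v c).neighborSet c := hz.1.symm
    rw [hN1] at hzmem
    rw [hzmem] at hz
    exact hz.2 (by rw [Sym2.eq_swap]; exact Set.mem_singleton _)
  have hnd1c'' : ((swapT T x v c).neighborSet c'').ncard = 2 := by
    by_cases h : c'' = v
    · subst h
      rw [swap_nbr_v hxv hvc]
      have hxnv : x ∉ T.neighborSet c'' \ {c} := fun hh => hnadj hh.1.symm
      rw [Set.ncard_insert_of_notMem hxnv (Set.toFinite _)]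
      have h5 := Set.ncard_diff_singleton_add_one (show c ∈ T.neighborSet c'' from hcv.symm)
        (Set.toFinite _)
      omega
    · rw [swap_nbr_other hxv (Ne.symm hxc'') h hc''ne_c]
      exact hc''2
  have hfin := lemmaA hT1G hT1 hmax1 hGvx'.symm hnadj1 hc''v' hre'' hnd1c''
  rw [hnd1x] at hfin
  omega


private lemma main_count [Fintype V] {G T : SimpleGraph V} (hTG : T ≤ G) (hT : T.IsTree)
    (hn : 2 ≤ Fintype.card V) (hG : NoDeg2Path3 G)
    (hmax : ∀ T' : SimpleGraph V, T' ≤ G → T'.IsTree →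
      {u | (T'.neighborSet u).ncard = 1}.ncard ≤ {u | (T.neighborSet u).ncard = 1}.ncard) :
    Fintype.card V + 14 ≤
      13 * (Finset.univ.filter fun v => (T.neighborSet v).ncard = 1).card := by
  classical
  set n := Fintype.card V with hndef
  set d : V → ℕ := fun v => (T.neighborSet v).ncard with hd
  set gd : V → ℕ := fun v => (G.neighborSet v).ncard with hgd
  have hdT : ∀ v, d v = T.degree v := by
    intro v
    show (T.neighborSet v).ncard = T.degree v
    rw [SimpleGraph.degree, neighborFinset_def]
    exact Set.ncard_eq_toFinset_card' _
  -- min degree 1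
  have hd1 : ∀ v, 1 ≤ d v := by
    intro v
    obtain ⟨u, hu⟩ := Fintype.exists_ne_of_one_lt_card (by omega) v
    obtain ⟨z, hz⟩ := exists_adj_of_reachable (hT.isConnected.preconnected u v) hu
    have : 0 < d v := by
      rw [hd]
      rw [Set.ncard_pos (Set.toFinite _)]
      exact ⟨z, hz.symm⟩
    omega
  -- handshake
  have hsum0 : ∑ v, T.degree v = 2 * T.edgeFinset.card := T.sum_degrees_eq_twice_card_edges
  have hecard : T.edgeFinset.card + 1 = n := hT.card_edgeFinset
  have hsum : ∑ v, d v + 2 = 2 * n := by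
    rw [Finset.sum_congr rfl fun v _ => hdT v]
    omega
  -- the three classes
  set L : Finset V := univ.filter (fun v => d v = 1) with hL
  set D2 : Finset V := univ.filter (fun v => d v = 2) with hD2
  set Br : Finset V := univ.filter (fun v => 3 ≤ d v) with hBr
  have hLD : Disjoint L D2 := by
    rw [Finset.disjoint_left]
    intro a ha hb
    simp only [hL, hD2, mem_filter] at ha hb
    omega
  have hLDBr : Disjoint (L ∪ D2) Br := by
    rw [Finset.disjoint_left]
    intro a ha hb
    simp only [hL, hD2, hBr, mem_filter, mem_union] at ha hb
    omega
  have hU : L ∪ D2 ∪ Br = univ := by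
    ext v
    simp only [hL, hD2, hBr, mem_union, mem_filter, mem_univ, true_and, iff_true]
    have := hd1 v
    omega
  have hcardU : L.card + D2.card + Br.card = n := by
    rw [hndef, ← Finset.card_univ, ← hU, Finset.card_union_of_disjoint hLDBr,
      Finset.card_union_of_disjoint hLD]
  have hsplit : ∑ v, d v = ∑ v ∈ L, d v + ∑ v ∈ D2, d v + ∑ v ∈ Br, d v := by
    rw [← Finset.sum_union hLD, ← Finset.sum_union hLDBr, hU]
  have hsumL : ∑ v ∈ L, d v = L.card := by
    rw [Finset.sum_congr rfl (fun v hv => by simpa [hL] using (Finset.mem_filter.1 hv).2)]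
    simp
  have hsumD2 : ∑ v ∈ D2, d v = 2 * D2.card := by
    rw [Finset.sum_congr rfl (fun v hv => by simpa [hD2] using (Finset.mem_filter.1 hv).2)]
    simp [mul_comm]
  have hsumBr3 : 3 * Br.card ≤ ∑ v ∈ Br, d v := by
    have h := Finset.card_nsmul_le_sum Br d 3
      (fun v hv => by simpa [hBr] using (Finset.mem_filter.1 hv).2)
    simpa [smul_eq_mul, mul_comm] using h
  -- interiorness
  set IntP : V → Prop := fun v => ∀ w, T.Adj v w → d w = 2 with hIntP
  set A2 : Finset V := D2.filter (fun v => gd v = 2) with hA2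
  set S2 : Finset V := D2.filter (fun v => ¬ gd v = 2) with hS2
  set C : Finset V := S2.filter IntP with hC
  set SB : Finset V := S2.filter (fun v => ¬ IntP v) with hSB
  set AI : Finset V := A2.filter IntP with hAI
  set AB : Finset V := A2.filter (fun v => ¬ IntP v) with hAB
  have hsplitD2 : AI.card + AB.card + (C.card + SB.card) = D2.card := by
    rw [hAI, hAB, hC, hSB, Finset.card_filter_add_card_filter_not,
      Finset.card_filter_add_card_filter_not, hA2, hS2,
      Finset.card_filter_add_card_filter_not]
  -- boundary bound
  set Bd : Finset V := D2.filter (fun v => ¬ IntP v) with hBd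
  have hBdsplit : AB.card + SB.card = Bd.card := by
    have hdisj : Disjoint AB SB := by
      rw [Finset.disjoint_left]
      intro a ha hb
      simp only [hAB, hSB, hA2, hS2, mem_filter] at ha hb
      exact hb.1.2 ha.1.2
    have : AB ∪ SB = Bd := by
      ext v
      simp only [hAB, hSB, hA2, hS2, hBd, mem_union, mem_filter]
      tauto
    rw [← this, Finset.card_union_of_disjoint hdisj]
  have hBdle : Bd.card ≤ L.card + ∑ v ∈ Br, d v := by
    have hsub : Bd ⊆ (univ.filter fun w => ¬ d w = 2).biUnion (fun w => T.neighborFinset w) := by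
      intro v hv
      simp only [hBd, mem_filter, hIntP] at hv
      push_neg at hv
      obtain ⟨w, hw1, hw2⟩ := hv.2
      rw [Finset.mem_biUnion]
      exact ⟨w, by simp [hw2], by rw [mem_neighborFinset]; exact hw1.symm⟩
    have h1 := Finset.card_le_card hsub
    have h2 := Finset.card_biUnion_le (s := univ.filter fun w => ¬ d w = 2)
      (t := fun w => T.neighborFinset w)
    have h3 : ∑ w ∈ univ.filter (fun w => ¬ d w = 2), (T.neighborFinset w).card
        = ∑ w ∈ univ.filter (fun w => ¬ d w = 2), d w := by
      refine Finset.sum_congr rfl fun w _ => ?_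
      rw [hdT w, SimpleGraph.degree]
    have h4 : (univ.filter fun w => ¬ d w = 2) = L ∪ Br := by
      ext v
      simp only [hL, hBr, mem_union, mem_filter, mem_univ, true_and]
      have := hd1 v
      omega
    have h5 : Disjoint L Br := by
      rw [Finset.disjoint_left]
      intro a ha hb
      simp only [hL, hBr, mem_filter] at ha hb
      omega
    have h6 : ∑ w ∈ L ∪ Br, d w = ∑ w ∈ L, d w + ∑ w ∈ Br, d w := Finset.sum_union h5
    have h7 : Bd.card ≤ ∑ w ∈ univ.filter (fun w => ¬ d w = 2), d w :=
      le_trans h1 (le_trans h2 (le_of_eq h3))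
    rw [h4, h6, hsumL] at h7
    exact h7
  -- AI bound
  have hpick : ∀ v ∈ AI, ∃ u, T.Adj v u ∧ u ∈ C ∪ SB := by
    intro v hv
    simp only [hAI, hA2, hD2, mem_filter, mem_univ, true_and] at hv
    obtain ⟨⟨hv2, hvg2⟩, hvInt⟩ := hv
    have hcard2 : (T.neighborFinset v).card = 2 := by
      rw [← SimpleGraph.degree, ← hdT v]; exact hv2
    obtain ⟨u1, u2, hne, hNeq⟩ := Finset.card_eq_two.1 hcard2
    have hadj1 : T.Adj v u1 := by
      rw [← mem_neighborFinset, hNeq]; simp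
    have hadj2 : T.Adj v u2 := by
      rw [← mem_neighborFinset, hNeq]; simp
    have hbig : ¬ gd u1 = 2 ∨ ¬ gd u2 = 2 := by
      by_contra hcon
      push_neg at hcon
      exact hG ⟨u1, v, u2, hne, (hTG hadj1).symm, hTG hadj2, hcon.1, hvg2, hcon.2⟩
    have hmem : ∀ u, T.Adj v u → ¬ gd u = 2 → u ∈ C ∪ SB := by
      intro u hadj hgu
      have huD2 : u ∈ S2 := by
        simp only [hS2, hD2, mem_filter, mem_univ, true_and]
        exact ⟨hvInt u hadj, hgu⟩
      rw [hC, hSB, Finset.filter_union_filter_not_eq]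
      exact huD2
    rcases hbig with h | h
    · exact ⟨u1, hadj1, hmem u1 hadj1 h⟩
    · exact ⟨u2, hadj2, hmem u2 hadj2 h⟩
  set F : V → V := fun v => if h : ∃ u, T.Adj v u ∧ u ∈ C ∪ SB then h.choose else v with hF
  have hFspec : ∀ v ∈ AI, T.Adj v (F v) ∧ F v ∈ C ∪ SB := by
    intro v hv
    have h := hpick v hv
    rw [hF]
    simp only [dif_pos h]
    exact h.choose_spec
  have hAIle : AI.card ≤ 2 * C.card + SB.card := by
    rw [Finset.card_eq_sum_card_fiberwise (fun v hv => (hFspec v hv).2)]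
    have hdisjCSB : Disjoint C SB := by
      rw [Finset.disjoint_left]
      intro a ha hb
      simp only [hC, hSB, mem_filter] at ha hb
      exact hb.2 ha.2
    rw [Finset.sum_union hdisjCSB]
    have hfibC : ∀ u ∈ C, (AI.filter fun v => F v = u).card ≤ 2 := by
      intro u hu
      have hsubN : (AI.filter fun v => F v = u) ⊆ T.neighborFinset u := by
        intro v hv
        rw [mem_filter] at hv
        have := (hFspec v hv.1).1
        rw [hv.2] at this
        rw [mem_neighborFinset]
        exact this.symm
      have h8 := Finset.card_le_card hsubN
      have h9 : (T.neighborFinset u).card = 2 := by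
        rw [← SimpleGraph.degree, ← hdT u]
        simp only [hC, hS2, hD2, mem_filter, mem_univ, true_and] at hu
        exact hu.1.1
      omega
    have hfibSB : ∀ u ∈ SB, (AI.filter fun v => F v = u).card ≤ 1 := by
      intro u hu
      simp only [hSB, hS2, hD2, mem_filter, mem_univ, true_and, hIntP] at hu
      obtain ⟨⟨hu2, -⟩, huB⟩ := hu
      push_neg at huB
      obtain ⟨w0, hw0adj, hw0d⟩ := huB
      have hsubN : (AI.filter fun v => F v = u) ⊆ (T.neighborFinset u).erase w0 := by
        intro v hv
        rw [mem_filter] at hv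
        have hadj := (hFspec v hv.1).1
        rw [hv.2] at hadj
        rw [Finset.mem_erase, mem_neighborFinset]
        refine ⟨?_, hadj.symm⟩
        intro hvw0
        have hv2 : d v = 2 := by
          have h12 := hv.1
          simp only [hAI, hA2, hD2, mem_filter, mem_univ, true_and] at h12
          exact h12.1.1
        rw [hvw0] at hv2
        exact hw0d hv2
      have h8 := Finset.card_le_card hsubN
      have h9 : (T.neighborFinset u).card = 2 := by
        rw [← SimpleGraph.degree, ← hdT u]
        exact hu2
      have h10 : w0 ∈ T.neighborFinset u := by rw [mem_neighborFinset]; exact hw0adj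
      have h11 := Finset.card_erase_of_mem h10
      omega
    have hsc : ∑ u ∈ C, (AI.filter fun v => F v = u).card ≤ 2 * C.card := by
      calc ∑ u ∈ C, (AI.filter fun v => F v = u).card ≤ ∑ u ∈ C, 2 :=
            Finset.sum_le_sum hfibC
        _ = 2 * C.card := by rw [Finset.sum_const, smul_eq_mul, mul_comm]
    have hssb : ∑ u ∈ SB, (AI.filter fun v => F v = u).card ≤ SB.card := by
      calc ∑ u ∈ SB, (AI.filter fun v => F v = u).card ≤ ∑ u ∈ SB, 1 :=
            Finset.sum_le_sum hfibSB
        _ = SB.card := by rw [Finset.sum_const, smul_eq_mul, mul_one]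
    omega
  -- C bound via charging
  have hpickx : ∀ v ∈ C, ∃ x, G.Adj v x ∧ ¬T.Adj v x := by
    intro v hv
    simp only [hC, hS2, hD2, mem_filter, mem_univ, true_and] at hv
    obtain ⟨⟨hv2, hvg⟩, -⟩ := hv
    have hsub : T.neighborSet v ⊆ G.neighborSet v := fun z hz => hTG hz
    have hne : T.neighborSet v ≠ G.neighborSet v := by
      intro h
      apply hvg
      show (G.neighborSet v).ncard = 2
      rw [← h]
      exact hv2
    obtain ⟨x, hx1, hx2⟩ := Set.exists_of_ssubset (Set.ssubset_iff_subset_ne.2 ⟨hsub, hne⟩)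
    exact ⟨x, hx1, hx2⟩
  set Fx : V → V := fun v => if h : ∃ x, G.Adj v x ∧ ¬T.Adj v x then h.choose else v with hFx
  have hFxspec : ∀ v ∈ C, G.Adj v (Fx v) ∧ ¬T.Adj v (Fx v) := by
    intro v hv
    have h := hpickx v hv
    rw [hFx]
    simp only [dif_pos h]
    exact h.choose_spec
  have hCmem : ∀ v ∈ C, d v = 2 ∧ ∀ w, T.Adj v w → d w = 2 := by
    intro v hv
    simp only [hC, hS2, hD2, mem_filter, mem_univ, true_and, hIntP] at hv
    exact ⟨hv.1.1, hv.2⟩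
  have hCle : C.card ≤ L.card := by
    apply Finset.card_le_card_of_injOn Fx
    · intro v hv
      simp only [hL, Finset.mem_coe, mem_filter, mem_univ, true_and]
      exact charge_leaf hTG hT hmax (hFxspec v hv).1 (hFxspec v hv).2 (hCmem v hv).2
    · intro v hv v' hv' heq
      by_contra hne
      have h1 := hFxspec v hv
      have h2 := hFxspec v' hv'
      rw [heq] at h1
      exact charge_inj hTG hT hmax hne (hCmem v hv).1 (hCmem v hv).2 (hCmem v' hv').2
        h1.1 h1.2 h2.1 h2.2
  -- final arithmetic
  omega

end Auxiliary

/-- A connected graph on `n ≥ 2` vertices with no path on three vertices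
all of degree 2 has a spanning tree with at least `n/14` leaves. -/
theorem spanning_tree_many_leaves {V : Type*} [Fintype V]
    (G : SimpleGraph V) (hconn : G.Connected)
    (hn : 2 ≤ Fintype.card V)
    (hG : NoDeg2Path3 G) :
    ∃ T : SimpleGraph V, T ≤ G ∧ T.IsTree ∧
      (Fintype.card V : ℝ) / 14 ≤ ({v : V | (T.neighborSet v).ncard = 1}).ncard := by
  classical
  obtain ⟨T0, hT0G, hT0⟩ := exists_spanning_tree G hconn
  obtain ⟨T, hTmem, hTmax⟩ := Finset.exists_max_image
    (Finset.univ.filter fun T : SimpleGraph V => T ≤ G ∧ T.IsTree)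
    (fun T => {u | (T.neighborSet u).ncard = 1}.ncard)
    ⟨T0, by simp [hT0G, hT0]⟩
  simp only [Finset.mem_filter, Finset.mem_univ, true_and] at hTmem
  obtain ⟨hTG, hT⟩ := hTmem
  have hmax : ∀ T' : SimpleGraph V, T' ≤ G → T'.IsTree →
      {u | (T'.neighborSet u).ncard = 1}.ncard ≤ {u | (T.neighborSet u).ncard = 1}.ncard :=
    fun T' h1 h2 => hTmax T' (by simp [h1, h2])
  refine ⟨T, hTG, hT, ?_⟩
  have hkey := main_count hTG hT hn hG hmax
  have hLs : ({v : V | (T.neighborSet v).ncard = 1}).ncard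
      = (Finset.univ.filter fun v => (T.neighborSet v).ncard = 1).card := by
    rw [Set.ncard_eq_toFinset_card']
    congr 1
    ext v
    simp
  rw [hLs]
  set k := (Finset.univ.filter fun v => (T.neighborSet v).ncard = 1).card with hk
  rw [div_le_iff₀ (by norm_num : (0:ℝ) < 14)]
  have h14 : Fintype.card V ≤ 14 * k := by omega
  calc (Fintype.card V : ℝ) ≤ ((14 * k : ℕ) : ℝ) := by exact_mod_cast h14
    _ = (k : ℝ) * 14 := by push_cast; ring

end CMCPaper
end

section
/- Let G = (V,E) be a finite simple undirected graph on at least two vertices with edge weights w : E → {0,1}, and let v ∈ V be a vertex all of whose incident edges have weight 0. Let G' be the graph on vertex set V \ {v} whose edge set consists of all edges of G not incident to v, together with a new edge {u, u'} for every pair of distinct neighbors u, u' of v with {u, u'} ∉ E; the weight function w' agrees with w on the edges of G and assigns weight 0 to every newly added edge. Then for every ψ ≥ 0: G' contains a nonempty S' ⊆ V \ {v} with G'[S'] connected and w'(δ_{G'}(S')) ≥ ψ if and only if G contains a nonempty S ⊆ V with G[S] connected and w(δ_G(S)) ≥ ψ. -/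
namespace CMCPaper

variable {V : Type*}

lemma mem_cutSet_iff (G : SimpleGraph V) (S : Set V) (u u' : V) :
    s(u, u') ∈ cutSet G S ↔ G.Adj u u' ∧ ((u ∈ S ∧ u' ∉ S) ∨ (u' ∈ S ∧ u ∉ S)) := by
  simp only [cutSet, Set.mem_setOf_eq, SimpleGraph.mem_edgeSet, Sym2.eq, Sym2.rel_iff',
    Prod.mk.injEq, Prod.swap_prod_mk]
  constructor
  · rintro ⟨hadj, a, b, (⟨rfl, rfl⟩ | ⟨rfl, rfl⟩), ha, hb⟩ <;> tauto
  · rintro ⟨hadj, (⟨hm1, hm2⟩ | ⟨hm1, hm2⟩)⟩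
    · exact ⟨hadj, u, u', Or.inl ⟨rfl, rfl⟩, hm1, hm2⟩
    · exact ⟨hadj, u', u, Or.inr ⟨rfl, rfl⟩, hm1, hm2⟩

lemma cutWeight_eq (G G' : SimpleGraph V) (w w' : Sym2 V → ℕ) (v : V)
    (hv : ∀ e ∈ G.edgeSet, v ∈ e → w e = 0)
    (hG' : ∀ u u' : V, G'.Adj u u' ↔
      ((G.Adj u u' ∧ u ≠ v ∧ u' ≠ v) ∨ (u ≠ u' ∧ G.Adj v u ∧ G.Adj v u')))
    (hw'old : ∀ e ∈ G.edgeSet, w' e = w e)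
    (hw'new : ∀ e ∉ G.edgeSet, w' e = 0)
    (S S' : Set V) (hSS' : ∀ x, x ≠ v → (x ∈ S ↔ x ∈ S')) :
    cutWeight G w S = cutWeight G' w' S' := by
  unfold cutWeight
  rw [finsum_mem_def, finsum_mem_def]
  congr 1
  funext e
  induction e using Sym2.ind with
  | _ u u' =>
  by_cases he : s(u, u') ∈ G.edgeSet
  · by_cases hve : v = u ∨ v = u'
    · have h0 : w s(u, u') = 0 := hv _ he (by simpa [Sym2.mem_iff] using hve)
      have h0' : w' s(u, u') = 0 := (hw'old _ he).trans h0
      rw [Set.indicator_apply_eq_zero.2 fun _ => h0, Set.indicator_apply_eq_zero.2 fun _ => h0']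
    · push_neg at hve
      obtain ⟨hvu, hvu'⟩ := hve
      have huv : u ≠ v := fun h => hvu h.symm
      have huv' : u' ≠ v := fun h => hvu' h.symm
      have hadj : G.Adj u u' := he
      have hadj' : G'.Adj u u' := (hG' u u').2 (Or.inl ⟨hadj, huv, huv'⟩)
      have hmem : s(u, u') ∈ cutSet G S ↔ s(u, u') ∈ cutSet G' S' := by
        rw [mem_cutSet_iff, mem_cutSet_iff, hSS' u huv, hSS' u' huv']
        simp [hadj, hadj']
      have hwe : w' s(u, u') = w s(u, u') := hw'old _ he
      by_cases hc : s(u, u') ∈ cutSet G S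
      · rw [Set.indicator_of_mem hc, Set.indicator_of_mem (hmem.1 hc), hwe]
      · rw [Set.indicator_of_notMem hc, Set.indicator_of_notMem (fun h => hc (hmem.2 h))]
  · have h1 : s(u, u') ∉ cutSet G S := fun h => he h.1
    have h0' : w' s(u, u') = 0 := hw'new _ he
    rw [Set.indicator_of_notMem h1, Set.indicator_apply_eq_zero.2 fun _ => h0']

lemma transfer1 (G G' : SimpleGraph V) (v : V)
    (h1 : ∀ a b : V, G.Adj a b → a ≠ v → b ≠ v → G'.Adj a b)
    (h2 : ∀ a b : V, a ≠ b → G.Adj v a → G.Adj v b → G'.Adj a b)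
    (S : Set V) :
    ∀ (n : ℕ) (x y : ↥S) (p : (G.induce S).Walk x y), p.length = n →
      ∀ (hxv : (x : V) ≠ v) (hyv : (y : V) ≠ v),
      (G'.induce (S \ {v})).Reachable ⟨x, x.2, hxv⟩ ⟨y, y.2, hyv⟩ := by
  intro n
  induction n using Nat.strong_induction_on with
  | _ n ih =>
    intro x y p hl hxv hyv
    cases p with
    | nil => rfl
    | @cons _ z _ h q =>
      by_cases hzv : (z : V) = v
      · cases q with
        | nil => exact absurd hzv hyv
        | @cons _ z2 _ h2' r =>
          have hadjxv : G.Adj (x : V) v := by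
            have : G.Adj (x : V) (z : V) := h
            rwa [hzv] at this
          have hadjvz2 : G.Adj v (z2 : V) := by
            have : G.Adj (z : V) (z2 : V) := h2'
            rwa [hzv] at this
          have hz2v : (z2 : V) ≠ v := fun hh => G.loopless.irrefl v (hh ▸ hadjvz2)
          have hrest : (G'.induce (S \ {v})).Reachable ⟨z2, z2.2, hz2v⟩ ⟨y, y.2, hyv⟩ := by
            refine ih r.length (by simp only [SimpleGraph.Walk.length_cons] at hl; omega)
              z2 y r rfl hz2v hyv
          by_cases hxz2 : (x : V) = (z2 : V)
          · have : (⟨x, x.2, hxv⟩ : ↥(S \ {v})) = ⟨z2, z2.2, hz2v⟩ := Subtype.ext hxz2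
            rw [this]; exact hrest
          · have hadj : G'.Adj (x : V) (z2 : V) := h2 _ _ hxz2 hadjxv.symm hadjvz2
            exact (SimpleGraph.Adj.reachable (by exact hadj :
              (G'.induce (S \ {v})).Adj ⟨x, x.2, hxv⟩ ⟨z2, z2.2, hz2v⟩)).trans hrest
      · have hadj : G'.Adj (x : V) (z : V) := h1 _ _ h hxv hzv
        have hrest := ih q.length (by simp only [SimpleGraph.Walk.length_cons] at hl; omega)
          z y q rfl hzv hyv
        exact (SimpleGraph.Adj.reachable (by exact hadj :
          (G'.induce (S \ {v})).Adj ⟨x, x.2, hxv⟩ ⟨z, z.2, hzv⟩)).trans hrest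

lemma transfer2 (G G' : SimpleGraph V) (v : V) (S' : Set V)
    (h : ∀ a b : V, G'.Adj a b → G.Adj a b ∨ (G.Adj v a ∧ G.Adj v b)) :
    ∀ (x y : ↥S') (p : (G'.induce S').Walk x y),
      (G.induce (S' ∪ {v})).Reachable ⟨x, Or.inl x.2⟩ ⟨y, Or.inl y.2⟩ := by
  intro x y p
  induction p with
  | nil => rfl
  | @cons a z _ hadj q ih =>
    have hstep : (G.induce (S' ∪ {v})).Reachable ⟨a, Or.inl a.2⟩ ⟨z, Or.inl z.2⟩ := by
      rcases h _ _ (hadj : G'.Adj (a : V) (z : V)) with hd | ⟨hva, hvz⟩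
      · exact SimpleGraph.Adj.reachable (by exact hd)
      · have hvmem : (v : V) ∈ S' ∪ {v} := Or.inr rfl
        exact (SimpleGraph.Adj.reachable (by exact hva.symm :
            (G.induce (S' ∪ {v})).Adj ⟨a, Or.inl a.2⟩ ⟨v, hvmem⟩)).trans
          (SimpleGraph.Adj.reachable (by exact hvz))
    exact hstep.trans ih

/-- Removing a vertex `v` all of whose incident edges have weight 0 and
adding 0-weight edges between all pairs of its neighbours preserves the optimum of the
{0,1}-Connected Maximum Cut problem. -/
theorem remove_zero_vertex {V : Type*} [Fintype V]
    (hV : 2 ≤ Fintype.card V)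
    (G G' : SimpleGraph V) (w w' : Sym2 V → ℕ)
    (hw : ∀ e ∈ G.edgeSet, w e ≤ 1)
    (v : V)
    (hv : ∀ e ∈ G.edgeSet, v ∈ e → w e = 0)
    (hG' : ∀ u u' : V, G'.Adj u u' ↔
      ((G.Adj u u' ∧ u ≠ v ∧ u' ≠ v) ∨ (u ≠ u' ∧ G.Adj v u ∧ G.Adj v u')))
    (hw'old : ∀ e ∈ G.edgeSet, w' e = w e)
    (hw'new : ∀ e ∉ G.edgeSet, w' e = 0)
    (ψ : ℕ) :
    (∃ S' : Set V, S'.Nonempty ∧ v ∉ S' ∧ (G'.induce S').Connected ∧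
        ψ ≤ cutWeight G' w' S') ↔
    (∃ S : Set V, S.Nonempty ∧ (G.induce S).Connected ∧ ψ ≤ cutWeight G w S) := by
  have hG'adjG : ∀ a b : V, G'.Adj a b → G.Adj a b ∨ (G.Adj v a ∧ G.Adj v b) := by
    intro a b hab
    rcases (hG' a b).1 hab with ⟨h, _, _⟩ | ⟨_, hh1, hh2⟩
    · exact Or.inl h
    · exact Or.inr ⟨hh1, hh2⟩
  constructor
  · rintro ⟨S', hne, hvS', hconn, hcut⟩
    by_cases hnb : ∃ u ∈ S', G.Adj v u
    · obtain ⟨u₀, hu₀S, hu₀adj⟩ := hnb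
      refine ⟨S' ∪ {v}, hne.mono Set.subset_union_left, ?_, ?_⟩
      · have hreach : ∀ (x : V) (hx : x ∈ S' ∪ {v}),
            (G.induce (S' ∪ {v})).Reachable ⟨x, hx⟩ ⟨u₀, Or.inl hu₀S⟩ := by
          intro x hx
          rcases hx with hx | hx
          · obtain ⟨p⟩ := hconn.preconnected ⟨x, hx⟩ ⟨u₀, hu₀S⟩
            exact transfer2 G G' v S' hG'adjG ⟨x, hx⟩ ⟨u₀, hu₀S⟩ p
          · have hxv : x = v := hx
            have hadjx : G.Adj x u₀ := by rw [hxv]; exact hu₀adj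
            exact SimpleGraph.Adj.reachable (by exact hadjx :
              (G.induce (S' ∪ {v})).Adj ⟨x, Or.inr hx⟩ ⟨u₀, Or.inl hu₀S⟩)
        have : Nonempty ↥(S' ∪ {v}) := ⟨⟨v, Or.inr rfl⟩⟩
        refine ⟨fun a b => ?_⟩
        exact (hreach a.1 a.2).trans (hreach b.1 b.2).symm
      · have heq := cutWeight_eq G G' w w' v hv hG' hw'old hw'new (S' ∪ {v}) S'
          (fun x hx => by simp [Set.mem_union, hx])
        omega
    · push_neg at hnb
      refine ⟨S', hne, ?_, ?_⟩
      · refine hconn.mono ?_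
        intro a b hab
        rcases hG'adjG a.1 b.1 hab with h | ⟨hh1, _⟩
        · exact h
        · exact absurd hh1 (hnb a.1 a.2)
      · have heq := cutWeight_eq G G' w w' v hv hG' hw'old hw'new S' S' (fun x _ => Iff.rfl)
        omega
  · rintro ⟨S, hne, hconn, hcut⟩
    by_cases hvS : v ∈ S
    · by_cases hS' : (S \ {v}).Nonempty
      · refine ⟨S \ {v}, hS', fun h => h.2 rfl, ?_, ?_⟩
        · have : Nonempty ↥(S \ {v}) := hS'.to_subtype
          refine ⟨fun a b => ?_⟩
          obtain ⟨p⟩ := hconn.preconnected ⟨a.1, a.2.1⟩ ⟨b.1, b.2.1⟩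
          exact transfer1 G G' v
            (fun x y hxy hx hy => (hG' x y).2 (Or.inl ⟨hxy, hx, hy⟩))
            (fun x y hxy hx hy => (hG' x y).2 (Or.inr ⟨hxy, hx, hy⟩))
            S p.length ⟨a.1, a.2.1⟩ ⟨b.1, b.2.1⟩ p rfl a.2.2 b.2.2
        · have heq := cutWeight_eq G G' w w' v hv hG' hw'old hw'new S (S \ {v})
            (fun x hx => by simp [Set.mem_diff, hx])
          omega
      · have hSv : S = {v} := by
          rw [Set.not_nonempty_iff_eq_empty, Set.diff_eq_empty] at hS'
          exact Set.Subset.antisymm hS' (by simpa using hvS)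
        have hzero : cutWeight G w S = 0 := by
          unfold cutWeight
          apply finsum_mem_of_eqOn_zero
          rintro e ⟨he, a, b, heq, ha, hb⟩
          apply hv _ he
          rw [hSv] at ha
          rw [heq, ha]
          exact Sym2.mem_mk_left v b
        have hψ : ψ = 0 := by omega
        obtain ⟨u, hu⟩ := Fintype.exists_ne_of_one_lt_card (by omega) v
        refine ⟨{u}, ⟨u, rfl⟩, by simp [Ne.symm hu], ?_, by omega⟩
        have : Nonempty ↥({u} : Set V) := ⟨⟨u, rfl⟩⟩
        refine ⟨fun a b => ?_⟩
        have hab : a = b := Subtype.ext (by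
          have ha : a.1 = u := a.2
          have hb : b.1 = u := b.2
          rw [ha, hb])
        rw [hab]
    · refine ⟨S, hne, hvS, ?_, ?_⟩
      · refine hconn.mono ?_
        intro a b hab
        have hav : a.1 ≠ v := fun h => hvS (h ▸ a.2)
        have hbv : b.1 ≠ v := fun h => hvS (h ▸ b.2)
        exact (hG' a.1 b.1).2 (Or.inl ⟨hab, hav, hbv⟩)
      · have heq := cutWeight_eq G G' w w' v hv hG' hw'old hw'new S S (fun x _ => Iff.rfl)
        omega

end CMCPaper
end

section
/- Let G = (V,E) be a connected finite simple undirected graph that contains no path on three vertices u–v–w with deg_G(u) = deg_G(v) = deg_G(w) = 2. Then G has a spanning tree T such that T contains no path on seven vertices all of which have degree 2 in T. -/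
namespace CMCPaper

variable {V : Type*}

section Aux

open SimpleGraph

noncomputable def count2 (H : SimpleGraph V) : ℕ :=
  {u | (H.neighborSet u).ncard = 2}.ncard

private lemma aux_reach_transfer {H H' : SimpleGraph V}
    (key : ∀ a b : V, H.Adj a b → H'.Reachable a b) {u w : V} (h : H.Reachable u w) :
    H'.Reachable u w := by
  obtain ⟨p⟩ := h
  induction p with
  | nil => exact Reachable.refl _
  | cons h q ih => exact (key _ _ h).trans ih

private lemma aux_nb_pair [Fintype V] {H : SimpleGraph V} {v a b : V}
    (h2 : (H.neighborSet v).ncard = 2) (ha : H.Adj v a) (hb : H.Adj v b) (hab : a ≠ b) :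
    H.neighborSet v = {a, b} := by
  refine (Set.eq_of_subset_of_ncard_le ?_ ?_ (Set.toFinite _)).symm
  · intro y hy
    rcases hy with rfl | hy
    · exact ha
    · rcases hy with rfl; exact hb
  · rw [h2, Set.ncard_pair hab]

/-- The edge-swap lemma: add `vx`, delete `bc`. -/
private lemma aux_swap [Fintype V] {G H : SimpleGraph V} (hHG : H ≤ G)
    (hc : H.Connected) {v b c x : V}
    (hvb : H.Adj v b) (hbc : H.Adj b c) (hvc : v ≠ c) (hxb : x ≠ b)
    (hGvx : G.Adj v x) (hHvx : ¬ H.Adj v x)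
    (hdv : (H.neighborSet v).ncard = 2) (hdb : (H.neighborSet b).ncard = 2)
    (hdc : (H.neighborSet c).ncard = 2)
    (hreach : (H.deleteEdges {s(b,c)}).Reachable c x) :
    ∃ H' : SimpleGraph V, H' ≤ G ∧ H'.Connected ∧
      H'.edgeSet.ncard = H.edgeSet.ncard ∧ count2 H' < count2 H := by
  classical
  have hvx : v ≠ x := hGvx.ne
  have hvb' : v ≠ b := hvb.ne
  have hbc' : b ≠ c := hbc.ne
  have hxv : x ≠ v := hvx.symm
  set H' : SimpleGraph V :=
    SimpleGraph.fromEdgeSet (insert s(v,x) (H.edgeSet \ {s(b,c)})) with hH'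
  have hadj' : ∀ a₁ a₂ : V, H'.Adj a₁ a₂ ↔
      (s(a₁,a₂) = s(v,x) ∨ (H.Adj a₁ a₂ ∧ s(a₁,a₂) ≠ s(b,c))) := by
    intro a₁ a₂
    rw [hH', fromEdgeSet_adj]
    constructor
    · rintro ⟨hm, hne⟩
      rcases hm with hm | ⟨hm, hne2⟩
      · exact Or.inl hm
      · exact Or.inr ⟨hm, hne2⟩
    · rintro (heq | ⟨hadj, hne⟩)
      · refine ⟨Or.inl heq, ?_⟩
        rcases Sym2.eq_iff.mp heq with ⟨rfl, rfl⟩ | ⟨rfl, rfl⟩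
        · exact hvx
        · exact hxv
      · exact ⟨Or.inr ⟨hadj, hne⟩, hadj.ne⟩
  -- neighbor sets
  have hnv : H'.neighborSet v = insert x (H.neighborSet v) := by
    ext w
    simp only [mem_neighborSet, hadj', Set.mem_insert_iff]
    constructor
    · rintro (heq | ⟨hadj, _⟩)
      · rcases Sym2.eq_iff.mp heq with ⟨-, rfl⟩ | ⟨h1, -⟩
        · exact Or.inl rfl
        · exact absurd h1 hvx
      · exact Or.inr hadj
    · rintro (rfl | hadj)
      · exact Or.inl rfl
      · refine Or.inr ⟨hadj, fun heq => ?_⟩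
        rcases Sym2.eq_iff.mp heq with ⟨rfl, -⟩ | ⟨rfl, -⟩
        · exact hvb' rfl
        · exact hvc rfl
  have hnb : H'.neighborSet b = {v} := by
    have hb2 : H.neighborSet b = {v, c} := aux_nb_pair hdb hvb.symm hbc hvc
    ext w
    simp only [mem_neighborSet, hadj', Set.mem_singleton_iff]
    constructor
    · rintro (heq | ⟨hadj, hne⟩)
      · rcases Sym2.eq_iff.mp heq with ⟨h1, -⟩ | ⟨h1, -⟩
        · exact absurd h1.symm hvb'
        · exact absurd h1.symm hxb
      · have hmem : w ∈ H.neighborSet b := hadj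
        rw [hb2] at hmem
        rcases hmem with rfl | rfl
        · rfl
        · exact absurd rfl hne
    · rintro rfl
      refine Or.inr ⟨hvb.symm, fun heq => ?_⟩
      rcases Sym2.eq_iff.mp heq with ⟨-, h2⟩ | ⟨h2, -⟩
      · exact hvc h2
      · exact hbc' h2
  have hnother : ∀ u : V, u ≠ v → u ≠ x → u ≠ b → u ≠ c →
      H'.neighborSet u = H.neighborSet u := by
    intro u h1 h2 h3 h4
    ext w
    simp only [mem_neighborSet, hadj']
    constructor
    · rintro (heq | ⟨hadj, -⟩)
      · rcases Sym2.eq_iff.mp heq with ⟨rfl, -⟩ | ⟨rfl, -⟩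
        · exact absurd rfl h1
        · exact absurd rfl h2
      · exact hadj
    · intro hadj
      refine Or.inr ⟨hadj, fun heq => ?_⟩
      rcases Sym2.eq_iff.mp heq with ⟨rfl, -⟩ | ⟨rfl, -⟩
      · exact h3 rfl
      · exact h4 rfl
  -- H' ≤ G
  have hle : H' ≤ G := by
    intro a₁ a₂ h
    rw [hadj'] at h
    rcases h with heq | ⟨hadj, -⟩
    · rcases Sym2.eq_iff.mp heq with ⟨rfl, rfl⟩ | ⟨rfl, rfl⟩
      · exact hGvx
      · exact hGvx.symm
    · exact hHG hadj
  -- connected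
  have hdel_le : H.deleteEdges {s(b,c)} ≤ H' := by
    intro a₁ a₂ h
    rw [deleteEdges_adj] at h
    rw [hadj']
    exact Or.inr ⟨h.1, by simpa using h.2⟩
  have hbc_reach : H'.Reachable b c := by
    have h1 : H'.Adj b v := by
      rw [hadj']
      refine Or.inr ⟨hvb.symm, fun heq => ?_⟩
      rcases Sym2.eq_iff.mp heq with ⟨-, h2⟩ | ⟨h2, -⟩
      · exact hvc h2
      · exact hbc' h2
    have h2 : H'.Adj v x := by
      rw [hadj']; exact Or.inl rfl
    exact (h1.reachable.trans h2.reachable).trans (hreach.symm.mono hdel_le)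
  have hconn' : H'.Connected := by
    have key : ∀ a₁ a₂ : V, H.Adj a₁ a₂ → H'.Reachable a₁ a₂ := by
      intro a₁ a₂ h
      by_cases heq : s(a₁,a₂) = s(b,c)
      · rcases Sym2.eq_iff.mp heq with ⟨rfl, rfl⟩ | ⟨rfl, rfl⟩
        · exact hbc_reach
        · exact hbc_reach.symm
      · exact Adj.reachable (by rw [hadj']; exact Or.inr ⟨h, heq⟩)
    have := hc.nonempty
    exact (connected_iff _).mpr ⟨fun a₁ a₂ => aux_reach_transfer key (hc.preconnected a₁ a₂), this⟩
  -- edge count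
  have hES : H'.edgeSet = insert s(v,x) (H.edgeSet \ {s(b,c)}) := by
    rw [hH', edgeSet_fromEdgeSet]
    ext e
    constructor
    · exact fun h => h.1
    · intro he
      refine ⟨he, fun hdiag => ?_⟩
      rcases he with rfl | ⟨he, -⟩
      · exact hvx (Sym2.isDiag_iff_proj_eq.mp hdiag)
      · exact H.not_isDiag_of_mem_edgeSet he hdiag
  have hcard : H'.edgeSet.ncard = H.edgeSet.ncard := by
    rw [hES]
    have hnotmem : s(v,x) ∉ H.edgeSet \ {s(b,c)} := by
      rintro ⟨hmem, -⟩
      exact hHvx hmem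
    rw [Set.ncard_insert_of_notMem hnotmem (Set.toFinite _)]
    have : (H.edgeSet \ {s(b,c)}).ncard + 1 = H.edgeSet.ncard :=
      Set.ncard_diff_singleton_add_one (by exact hbc) (Set.toFinite _)
    omega
  -- count2
  have hcount : count2 H' < count2 H := by
    set S : Set V := {u | (H.neighborSet u).ncard = 2} with hS
    set S' : Set V := {u | (H'.neighborSet u).ncard = 2} with hS'
    have hvS : v ∈ S := hdv
    have hbS : b ∈ S := hdb
    have hsub : S' ⊆ (insert x S) \ {v, b} := by
      intro u hu
      have hu' : (H'.neighborSet u).ncard = 2 := hu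
      have huv : u ≠ v := by
        rintro rfl
        rw [hnv] at hu'
        have hxnot : x ∉ H.neighborSet u := hHvx
        have := Set.ncard_insert_of_notMem hxnot (Set.toFinite _)
        rw [hdv] at this
        omega
      have hub : u ≠ b := by
        rintro rfl
        rw [hnb, Set.ncard_singleton] at hu'
        omega
      refine ⟨?_, by simp [huv, hub]⟩
      by_cases hux : u = x
      · exact Or.inl hux
      · by_cases huc : u = c
        · exact Or.inr (by rw [hS, Set.mem_setOf_eq, huc]; exact hdc)
        · rw [hnother u huv hux hub huc] at hu'
          exact Or.inr hu'
    have h1 : S'.ncard ≤ ((insert x S) \ {v, b}).ncard :=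
      Set.ncard_le_ncard hsub (Set.toFinite _)
    have hvb2 : ({v, b} : Set V) ⊆ insert x S := by
      rintro y (rfl | rfl)
      · exact Or.inr hvS
      · exact Or.inr hbS
    have h2 : ((insert x S) \ {v, b}).ncard = (insert x S).ncard - 2 := by
      rw [Set.ncard_diff hvb2 (Set.toFinite _), Set.ncard_pair hvb']
    have h3 : (insert x S).ncard ≤ S.ncard + 1 := Set.ncard_insert_le _ _
    have h4 : 1 ≤ S.ncard := by
      have : 0 < S.ncard := (Set.ncard_pos (Set.toFinite _)).mpr ⟨v, hvS⟩
      omega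
    have h5 : 2 ≤ (insert x S).ncard := by
      have : ({v, b} : Set V).ncard ≤ (insert x S).ncard :=
        Set.ncard_le_ncard hvb2 (Set.toFinite _)
      rw [Set.ncard_pair hvb'] at this
      exact this
    rw [count2, count2, ← hS, ← hS']
    omega
  exact ⟨H', hle, hconn', hcard, hcount⟩

/-- From a path `v :: b :: ...` to `x`, with `b` of degree two with neighbours `v,c`,
the tail gives reachability from `c` to `x` avoiding the edge `bc`. -/
private lemma aux_step {H : SimpleGraph V} {v b c x : V}
    (h : H.Adj v b) {q : H.Walk b x}
    (hpath : (SimpleGraph.Walk.cons h q).IsPath)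
    (hnb : H.neighborSet b = {v, c}) (hxb : x ≠ b) :
    (H.deleteEdges {s(b,c)}).Reachable c x := by
  cases q with
  | nil => exact absurd rfl hxb
  | @cons _ w2 _ h₂ q₂ =>
    have hw2 : w2 ∈ H.neighborSet b := h₂
    rw [hnb] at hw2
    have hp1 : (SimpleGraph.Walk.cons h₂ q₂).IsPath ∧ v ∉ (SimpleGraph.Walk.cons h₂ q₂).support :=
      (SimpleGraph.Walk.cons_isPath_iff _ _).mp hpath
    rw [Set.mem_insert_iff, Set.mem_singleton_iff] at hw2
    rcases hw2 with h1 | h1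
    · exfalso
      exact hp1.2 (by
        rw [SimpleGraph.Walk.support_cons]
        exact List.mem_cons_of_mem _ (h1 ▸ q₂.start_mem_support))
    · have hp2 : q₂.IsPath ∧ b ∉ q₂.support :=
        (SimpleGraph.Walk.cons_isPath_iff _ _).mp hp1.1
      have hedges : ∀ e, e ∈ q₂.edges → e ∉ ({s(b,c)} : Set (Sym2 V)) := by
        intro e he hmem
        rw [Set.mem_singleton_iff] at hmem
        subst hmem
        exact hp2.2 (q₂.fst_mem_support_of_mem_edges he)
      exact ⟨(q₂.toDeleteEdges _ hedges).copy h1 rfl⟩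

/-- If `d - a - v - b - c` is a path of degree-two (in `H`) vertices and
`v` has `G`-degree `≠ 2`, we can swap an edge to decrease the number of
degree-two vertices, keeping connectivity and the edge count. -/
private lemma aux_bad [Fintype V] {G H : SimpleGraph V} (hHG : H ≤ G)
    (hc : H.Connected) {d a v b c : V}
    (hda : H.Adj d a) (hav : H.Adj a v) (hvb : H.Adj v b) (hbc : H.Adj b c)
    (hdv : d ≠ v) (hab : a ≠ b) (hvc : v ≠ c)
    (hdd : (H.neighborSet d).ncard = 2) (hdega : (H.neighborSet a).ncard = 2)
    (hdegv : (H.neighborSet v).ncard = 2) (hdegb : (H.neighborSet b).ncard = 2)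
    (hdegc : (H.neighborSet c).ncard = 2)
    (hGv : (G.neighborSet v).ncard ≠ 2) :
    ∃ H' : SimpleGraph V, H' ≤ G ∧ H'.Connected ∧
      H'.edgeSet.ncard = H.edgeSet.ncard ∧ count2 H' < count2 H := by
  classical
  -- find an extra `G`-neighbour `x` of `v`
  have hsub : H.neighborSet v ⊆ G.neighborSet v := fun y hy => hHG hy
  have h2le : 2 ≤ (G.neighborSet v).ncard := by
    rw [← hdegv]
    exact Set.ncard_le_ncard hsub (Set.toFinite _)
  obtain ⟨x, hGvx, hHvx⟩ : ∃ x, G.Adj v x ∧ ¬ H.Adj v x := by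
    by_contra hno
    push_neg at hno
    have : G.neighborSet v ⊆ H.neighborSet v := fun y hy => hno y hy
    have hle2 : (G.neighborSet v).ncard ≤ 2 := by
      rw [← hdegv]
      exact Set.ncard_le_ncard this (Set.toFinite _)
    omega
  have hnv : H.neighborSet v = {a, b} := aux_nb_pair hdegv hav.symm hvb hab
  have hna : H.neighborSet a = {v, d} := by
    rw [aux_nb_pair hdega hda.symm hav hdv]
    exact Set.pair_comm d v
  have hnb : H.neighborSet b = {v, c} := aux_nb_pair hdegb hvb.symm hbc hvc
  have hxa : x ≠ a := by
    rintro rfl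
    exact hHvx hav.symm
  have hxb : x ≠ b := by
    rintro rfl
    exact hHvx hvb
  -- find a path from v to x and look at its first step
  obtain ⟨w0⟩ := hc.preconnected v x
  obtain ⟨W, hW⟩ := w0.toPath
  cases W with
  | nil => exact absurd rfl hGvx.ne
  | @cons _ w1 _ h q =>
    have hw1 : w1 ∈ H.neighborSet v := h
    rw [hnv] at hw1
    rw [Set.mem_insert_iff, Set.mem_singleton_iff] at hw1
    rcases hw1 with rfl | rfl
    · -- first step towards a : swap using (v, a, d, x)
      have hreach := aux_step h hW hna hxa
      exact aux_swap hHG hc hav.symm hda.symm hdv.symm hxa hGvx hHvx hdegv hdega hdd hreach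
    · -- first step towards b : swap using (v, b, c, x)
      have hreach := aux_step h hW hnb hxb
      exact aux_swap hHG hc hvb hbc hvc hxb hGvx hHvx hdegv hdegb hdegc hreach


/-- Deleting a non-bridge edge keeps connectivity and decreases the edge count. -/
private lemma aux_acyclic_or [Fintype V] {G H : SimpleGraph V} (hHG : H ≤ G)
    (hc : H.Connected) (hnac : ¬ H.IsAcyclic) :
    ∃ H' : SimpleGraph V, H' ≤ G ∧ H'.Connected ∧
      H'.edgeSet.ncard < H.edgeSet.ncard := by
  classical
  rw [isAcyclic_iff_forall_adj_isBridge] at hnac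
  push_neg at hnac
  obtain ⟨u, w, hadj, hnb⟩ := hnac
  set H' := H.deleteEdges {s(u,w)} with hH'
  have hr : H'.Reachable u w := by
    rw [isBridge_iff] at hnb
    push_neg at hnb
    exact hnb
  have key : ∀ a b : V, H.Adj a b → H'.Reachable a b := by
    intro a b h
    by_cases heq : s(a,b) = s(u,w)
    · rcases Sym2.eq_iff.mp heq with ⟨rfl, rfl⟩ | ⟨rfl, rfl⟩
      · exact hr
      · exact hr.symm
    · exact Adj.reachable (deleteEdges_adj.mpr ⟨h, by simpa using heq⟩)
  refine ⟨H', ?_, ?_, ?_⟩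
  · intro a b h
    exact hHG (deleteEdges_adj.mp h).1
  · have := hc.nonempty
    exact (connected_iff _).mpr ⟨fun a b => aux_reach_transfer key (hc.preconnected a b), this⟩
  · have hES : H'.edgeSet = H.edgeSet \ {s(u,w)} := by
      ext e
      rw [hH', edgeSet_deleteEdges]
    rw [hES]
    have h1 : (H.edgeSet \ {s(u,w)}).ncard + 1 = H.edgeSet.ncard :=
      Set.ncard_diff_singleton_add_one (by exact hadj) (Set.toFinite _)
    omega

end Aux

/-- A connected graph with no path on three vertices all of degree 2 has a
spanning tree `T` containing no path on seven vertices all of degree 2 in `T`. -/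
theorem spanning_tree_no_long_deg2_path {V : Type*} [Fintype V]
    (G : SimpleGraph V) (hconn : G.Connected)
    (hG : NoDeg2Path3 G) :
    ∃ T : SimpleGraph V, T ≤ G ∧ T.IsTree ∧
      ¬ ∃ p : Fin 7 → V, Function.Injective p ∧
          (∀ i : Fin 6, T.Adj (p i.castSucc) (p i.succ)) ∧
          (∀ i : Fin 7, (T.neighborSet (p i)).ncard = 2) := by
  classical
  set N := Fintype.card V with hN
  set Φ : SimpleGraph V → ℕ := fun H => (N + 1) * H.edgeSet.ncard + count2 H with hΦ
  set S : Set ℕ := {n | ∃ H : SimpleGraph V, (H ≤ G ∧ H.Connected) ∧ Φ H = n} with hSdef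
  have hB : S.Nonempty := ⟨Φ G, G, ⟨le_rfl, hconn⟩, rfl⟩
  obtain ⟨H, ⟨hHG, hHc⟩, hmin_eq⟩ := Nat.sInf_mem hB
  have hmin : ∀ H' : SimpleGraph V, H' ≤ G → H'.Connected →
      (N + 1) * H.edgeSet.ncard + count2 H ≤ (N + 1) * H'.edgeSet.ncard + count2 H' := by
    intro H' h1 h2
    have : sInf S ≤ Φ H' := Nat.sInf_le ⟨H', ⟨h1, h2⟩, rfl⟩
    rw [← hmin_eq] at this
    exact this
  have hcount_le : ∀ K : SimpleGraph V, count2 K ≤ N := by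
    intro K
    have h1 : count2 K ≤ (Set.univ : Set V).ncard :=
      Set.ncard_le_ncard (Set.subset_univ _) (Set.toFinite _)
    rwa [Set.ncard_univ, Nat.card_eq_fintype_card] at h1
  have hacyc : H.IsAcyclic := by
    by_contra hnac
    obtain ⟨H', h1, h2, h3⟩ := aux_acyclic_or hHG hHc hnac
    have hmin' := hmin H' h1 h2
    have hc2 := hcount_le H'
    have hm : (N+1) * H'.edgeSet.ncard + (N+1) ≤ (N+1) * H.edgeSet.ncard := by
      have h4 : H'.edgeSet.ncard + 1 ≤ H.edgeSet.ncard := h3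
      calc (N+1) * H'.edgeSet.ncard + (N+1) = (N+1) * (H'.edgeSet.ncard + 1) := by ring
        _ ≤ (N+1) * H.edgeSet.ncard := Nat.mul_le_mul_left _ h4
    omega
  refine ⟨H, hHG, ⟨hHc, hacyc⟩, ?_⟩
  rintro ⟨p, hinj, hadjp, hdegp⟩
  have A : ∀ (j : ℕ) (hj : j < 6),
      H.Adj (p ⟨j, by omega⟩) (p ⟨j+1, by omega⟩) := fun j hj => hadjp ⟨j, hj⟩
  have D : ∀ (j : ℕ) (hj : j < 7),
      (H.neighborSet (p ⟨j, hj⟩)).ncard = 2 := fun j hj => hdegp ⟨j, hj⟩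
  have NE : ∀ (j k : ℕ) (hj : j < 7) (hk : k < 7), j ≠ k →
      p ⟨j, hj⟩ ≠ p ⟨k, hk⟩ := by
    intro j k hj hk hne h
    have := hinj h
    simp only [Fin.mk.injEq] at this
    exact hne this
  have hkey : ∃ H' : SimpleGraph V, H' ≤ G ∧ H'.Connected ∧
      H'.edgeSet.ncard = H.edgeSet.ncard ∧ count2 H' < count2 H := by
    by_cases k2 : (G.neighborSet (p ⟨2, by omega⟩)).ncard = 2
    · by_cases k3 : (G.neighborSet (p ⟨3, by omega⟩)).ncard = 2
      · by_cases k4 : (G.neighborSet (p ⟨4, by omega⟩)).ncard = 2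
        · exact absurd ⟨p ⟨2, by omega⟩, p ⟨3, by omega⟩, p ⟨4, by omega⟩,
            NE 2 4 (by omega) (by omega) (by omega),
            hHG (A 2 (by omega)), hHG (A 3 (by omega)), k2, k3, k4⟩ hG
        · exact aux_bad hHG hHc (A 2 (by omega)) (A 3 (by omega)) (A 4 (by omega))
            (A 5 (by omega)) (NE 2 4 (by omega) (by omega) (by omega))
            (NE 3 5 (by omega) (by omega) (by omega))
            (NE 4 6 (by omega) (by omega) (by omega))
            (D 2 (by omega)) (D 3 (by omega)) (D 4 (by omega)) (D 5 (by omega))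
            (D 6 (by omega)) k4
      · exact aux_bad hHG hHc (A 1 (by omega)) (A 2 (by omega)) (A 3 (by omega))
          (A 4 (by omega)) (NE 1 3 (by omega) (by omega) (by omega))
          (NE 2 4 (by omega) (by omega) (by omega))
          (NE 3 5 (by omega) (by omega) (by omega))
          (D 1 (by omega)) (D 2 (by omega)) (D 3 (by omega)) (D 4 (by omega))
          (D 5 (by omega)) k3
    · exact aux_bad hHG hHc (A 0 (by omega)) (A 1 (by omega)) (A 2 (by omega))
        (A 3 (by omega)) (NE 0 2 (by omega) (by omega) (by omega))
        (NE 1 3 (by omega) (by omega) (by omega))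
        (NE 2 4 (by omega) (by omega) (by omega))
        (D 0 (by omega)) (D 1 (by omega)) (D 2 (by omega)) (D 3 (by omega))
        (D 4 (by omega)) k2
  obtain ⟨H', h1, h2, h3, h4⟩ := hkey
  have hmin' := hmin H' h1 h2
  rw [h3] at hmin'
  omega

end CMCPaper
end

section
/- Let G = (V,E) be a connected finite simple undirected graph on n ≥ 2 vertices with edge weights w : E → {0,1}, such that every vertex of G is incident to at least one 1-edge and G contains no path on three vertices all of which have degree 2 in G. Then G has a spanning tree T whose leaf set L satisfies Σ_{v ∈ L} W_G(v) ≥ n/14. -/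
namespace CMCPaper

variable {V : Type*}

set_option linter.unusedSectionVars false
set_option maxHeartbeats 1000000

namespace CMCAux


open scoped Classical

variable {V : Type*} [Fintype V]

/-- A valid rooted spanning parent map for `G`. -/
def PValid (G : SimpleGraph V) (r : V) (p : V → V) : Prop :=
  p r = r ∧ (∀ v, v ≠ r → G.Adj v (p v)) ∧ ∀ v, ∃ k, p^[k] v = r

variable {G : SimpleGraph V} {r : V} {p : V → V}

lemma PValid.iterate_root (h : PValid G r p) (k : ℕ) : p^[k] r = r := by
  induction k with
  | zero => rfl
  | succ n ih => rw [Function.iterate_succ_apply', ih, h.1]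

lemma PValid.noper (h : PValid G r p) {v : V} {k : ℕ} (hk : p^[k] v = v) (hv : v ≠ r) :
    k = 0 := by
  by_contra hk0
  obtain ⟨j, hj⟩ := h.2.2 v
  have hmult : ∀ m : ℕ, p^[m * k] v = v := by
    intro m
    induction m with
    | zero => simp
    | succ n ih => rw [Nat.succ_mul, Function.iterate_add_apply, hk, ih]
  have hjk : j ≤ j * k := Nat.le_mul_of_pos_right j (Nat.pos_of_ne_zero hk0)
  have h1 : p^[j * k] v = r := by
    have h2 : j * k = (j * k - j) + j := by omega
    rw [h2, Function.iterate_add_apply, hj, h.iterate_root]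
  rw [hmult j] at h1
  exact hv h1

lemma PValid.parent_ne (h : PValid G r p) {v : V} (hv : v ≠ r) : p v ≠ v := by
  intro hpv
  exact hv ((Nat.one_ne_zero (h.noper (k := 1) hpv hv)).elim)

/-- descendants of `u` (including `u`). -/
def desc (p : V → V) (u : V) : Set V := {v | ∃ k, p^[k] v = u}

lemma mem_desc_self (p : V → V) (u : V) : u ∈ desc p u := ⟨0, rfl⟩

lemma mem_desc_of_parent_mem {u w : V} (hw : p w ∈ desc p u) : w ∈ desc p u := by
  obtain ⟨k, hk⟩ := hw; exact ⟨k + 1, by rwa [Function.iterate_succ_apply]⟩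

lemma parent_mem_desc {u w : V} (hw : w ∈ desc p u) (hne : w ≠ u) : p w ∈ desc p u := by
  obtain ⟨k, hk⟩ := hw
  cases k with
  | zero => exact absurd hk hne
  | succ n => exact ⟨n, by rwa [Function.iterate_succ_apply] at hk⟩

lemma root_not_mem_desc (h : PValid G r p) {u : V} (hu : u ≠ r) : r ∉ desc p u := by
  rintro ⟨k, hk⟩
  rw [h.iterate_root] at hk
  exact hu hk.symm

lemma desc_antisymm (h : PValid G r p) {u v : V} (huv : u ∈ desc p v) (hvu : v ∈ desc p u) :
    u = v := by
  obtain ⟨k, hk⟩ := huv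
  obtain ⟨l, hl⟩ := hvu
  by_contra hne
  have hcyc : p^[l + k] u = u := by rw [Function.iterate_add_apply, hk, hl]
  by_cases hur : u = r
  · subst hur
    rw [h.iterate_root] at hk
    exact (hne hk).elim
  · have := h.noper hcyc hur
    have hk0 : k = 0 := by omega
    rw [hk0] at hk
    exact hne hk

lemma parent_not_mem_desc (h : PValid G r p) {u : V} (hu : u ≠ r) : p u ∉ desc p u := by
  intro hmem
  have h2 : u ∈ desc p (p u) := ⟨1, rfl⟩
  exact h.parent_ne hu (desc_antisymm h hmem h2)

lemma not_mem_desc_parent (h : PValid G r p) {u w : V} (hw : w ∉ desc p u) :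
    p w ∉ desc p u := by
  intro hmem
  exact hw (mem_desc_of_parent_mem hmem)

/-- depth: distance to root along parent chain. -/
noncomputable def pdep (h : PValid G r p) (v : V) : ℕ := Nat.find (h.2.2 v)

lemma pdep_spec (h : PValid G r p) (v : V) : p^[pdep h v] v = r := Nat.find_spec (h.2.2 v)

lemma pdep_pos (h : PValid G r p) {v : V} (hv : v ≠ r) : 0 < pdep h v := by
  rcases Nat.eq_zero_or_pos (pdep h v) with h0 | h0
  · exact absurd (by simpa [h0] using pdep_spec h v) hv
  · exact h0

lemma pdep_parent_lt (h : PValid G r p) {v : V} (hv : v ≠ r) :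
    pdep h (p v) < pdep h v := by
  have hpos := pdep_pos h hv
  have hspec : p^[pdep h v - 1] (p v) = r := by
    rw [← Function.iterate_succ_apply, Nat.succ_eq_add_one, Nat.sub_add_cancel hpos]
    exact pdep_spec h v
  have hle : pdep h (p v) ≤ pdep h v - 1 := Nat.find_min' (h.2.2 (p v)) hspec
  omega

/-- the tree graph of a parent map -/
def ptree (r : V) (p : V → V) : SimpleGraph V where
  Adj u v := u ≠ v ∧ ((u ≠ r ∧ p u = v) ∨ (v ≠ r ∧ p v = u))
  symm := ⟨by intro u v hv; exact ⟨Ne.symm hv.1, hv.2.symm⟩⟩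
  loopless := ⟨fun v hv => hv.1 rfl⟩

lemma ptree_adj {u v : V} : (ptree r p).Adj u v ↔
    u ≠ v ∧ ((u ≠ r ∧ p u = v) ∨ (v ≠ r ∧ p v = u)) := Iff.rfl

lemma ptree_le (h : PValid G r p) : ptree r p ≤ G := by
  intro u v huv
  rcases huv.2 with ⟨hur, hpu⟩ | ⟨hvr, hpv⟩
  · exact hpu ▸ h.2.1 u hur
  · exact (hpv ▸ h.2.1 v hvr).symm

lemma ptree_adj_parent (h : PValid G r p) {v : V} (hv : v ≠ r) :
    (ptree r p).Adj v (p v) :=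
  ⟨(h.parent_ne hv).symm, Or.inl ⟨hv, rfl⟩⟩

lemma ptree_reach (h : PValid G r p) (v : V) : (ptree r p).Reachable v r := by
  generalize hn : pdep h v = n
  induction n using Nat.strong_induction_on generalizing v with
  | _ n ih =>
    by_cases hv : v = r
    · subst hv
      exact SimpleGraph.Reachable.refl v
    · have hlt := pdep_parent_lt h hv
      exact (ptree_adj_parent h hv).reachable.trans
        (ih (pdep h (p v)) (by omega) (p v) rfl)

lemma ptree_connected (h : PValid G r p) : (ptree r p).Connected := by
  rw [SimpleGraph.connected_iff]
  exact ⟨fun u v => (ptree_reach h u).trans (ptree_reach h v).symm, ⟨r⟩⟩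

lemma ptree_isBridge (h : PValid G r p) {a : V} (ha : a ≠ r) :
    ¬ (ptree r p \ SimpleGraph.fromEdgeSet {s(a, p a)}).Reachable a (p a) := by
  rintro ⟨W⟩
  obtain ⟨d, hd, hdf, hds⟩ := W.exists_boundary_dart (desc p a)
    (mem_desc_self p a) (parent_not_mem_desc h ha)
  have hadj := d.adj
  rw [SimpleGraph.sdiff_adj] at hadj
  obtain ⟨hadj1, hadj2⟩ := hadj
  rcases hadj1.2 with ⟨h1r, h1p⟩ | ⟨h2r, h2p⟩
  · -- d.snd = p d.fst
    have hfst : d.fst = a := by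
      by_contra hne
      exact hds (h1p ▸ parent_mem_desc hdf hne)
    apply hadj2
    rw [SimpleGraph.fromEdgeSet_adj]
    refine ⟨?_, hadj1.1⟩
    rw [hfst] at h1p ⊢
    simp [← h1p]
  · -- d.fst = p d.snd
    exact hds (mem_desc_of_parent_mem (h2p.symm ▸ hdf))

lemma ptree_isTree (h : PValid G r p) : (ptree r p).IsTree := by
  refine ⟨ptree_connected h, ?_⟩
  rw [SimpleGraph.isAcyclic_iff_forall_adj_isBridge]
  intro u v huv
  rcases huv.2 with ⟨hur, hpu⟩ | ⟨hvr, hpv⟩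
  · subst hpu
    exact ptree_isBridge h hur
  · subst hpv
    rw [Sym2.eq_swap]
    exact ptree_isBridge h hvr

/-- children of a vertex under a parent map -/
noncomputable def children (r : V) (p : V → V) (v : V) : Finset V :=
  Finset.univ.filter (fun u => u ≠ r ∧ p u = v)

lemma mem_children {u v : V} : u ∈ children r p v ↔ u ≠ r ∧ p u = v := by
  simp [children]

lemma parent_not_mem_children (h : PValid G r p) (v : V) :
    p v ∉ children r p v := by
  rw [mem_children]
  rintro ⟨hpr, hpp⟩
  by_cases hv : v = r
  · exact hpr (by rw [hv, h.1])
  · have h2 : p^[2] v = v := hpp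
    exact absurd (h.noper h2 hv) (by omega)

lemma self_not_mem_children (h : PValid G r p) (v : V) : v ∉ children r p v := by
  rw [mem_children]
  rintro ⟨hvr, hvv⟩
  exact h.parent_ne hvr hvv

lemma ptree_neighborFinset (h : PValid G r p) (v : V) :
    (ptree r p).neighborFinset v =
      if v = r then children r p v else insert (p v) (children r p v) := by
  by_cases hv : v = r
  · rw [if_pos hv]
    ext u
    rw [SimpleGraph.mem_neighborFinset, ptree_adj, mem_children]
    constructor
    · rintro ⟨hne, ⟨hvr, hpv⟩ | ⟨hur, hpu⟩⟩
      · exact absurd hv hvr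
      · exact ⟨hur, hpu⟩
    · rintro ⟨hur, hpu⟩
      refine ⟨?_, Or.inr ⟨hur, hpu⟩⟩
      intro hvu
      exact h.parent_ne hur (by rw [hpu, hvu])
  · rw [if_neg hv]
    ext u
    rw [SimpleGraph.mem_neighborFinset, ptree_adj, Finset.mem_insert, mem_children]
    constructor
    · rintro ⟨hne, ⟨hvr, hpv⟩ | ⟨hur, hpu⟩⟩
      · exact Or.inl hpv.symm
      · exact Or.inr ⟨hur, hpu⟩
    · rintro (rfl | ⟨hur, hpu⟩)
      · exact ⟨(h.parent_ne hv).symm, Or.inl ⟨hv, rfl⟩⟩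
      · refine ⟨?_, Or.inr ⟨hur, hpu⟩⟩
        intro hvu
        exact h.parent_ne hur (by rw [hpu, hvu])

lemma ptree_degree (h : PValid G r p) (v : V) :
    (ptree r p).degree v =
      (children r p v).card + (if v = r then 0 else 1) := by
  rw [← SimpleGraph.card_neighborFinset_eq_degree, ptree_neighborFinset h]
  by_cases hv : v = r
  · simp [hv]
  · rw [if_neg hv, if_neg hv, Finset.card_insert_of_notMem (parent_not_mem_children h v)]

lemma ptree_edgeFinset (h : PValid G r p) :
    (ptree r p).edgeFinset =
      (Finset.univ.erase r).image (fun v => s(v, p v)) := by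
  ext e
  induction e with
  | _ a b =>
    rw [SimpleGraph.mem_edgeFinset, SimpleGraph.mem_edgeSet, ptree_adj]
    simp only [Finset.mem_image, Finset.mem_erase, Finset.mem_univ, and_true]
    constructor
    · rintro ⟨hne, ⟨har, hpa⟩ | ⟨hbr, hpb⟩⟩
      · exact ⟨a, har, by rw [hpa]⟩
      · exact ⟨b, hbr, by rw [hpb, Sym2.eq_swap]⟩
    · rintro ⟨v, hvr, hv⟩
      rw [Sym2.eq_iff] at hv
      rcases hv with ⟨rfl, rfl⟩ | ⟨rfl, rfl⟩
      · exact ⟨(h.parent_ne hvr).symm, Or.inl ⟨hvr, rfl⟩⟩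
      · exact ⟨h.parent_ne hvr, Or.inr ⟨hvr, rfl⟩⟩

lemma ptree_card_edgeFinset (h : PValid G r p) :
    (ptree r p).edgeFinset.card = Fintype.card V - 1 := by
  rw [ptree_edgeFinset h, Finset.card_image_of_injOn, Finset.card_erase_of_mem
    (Finset.mem_univ r), Finset.card_univ]
  intro u hu v hv huv
  simp only [Finset.coe_erase, Set.mem_diff, Finset.coe_univ, Set.mem_univ, true_and,
    Set.mem_singleton_iff] at hu hv
  rw [Sym2.eq_iff] at huv
  rcases huv with ⟨rfl, _⟩ | ⟨h1, h2⟩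
  · rfl
  · subst h1
    have : p^[2] (p v) = p v := by
      show p (p (p v)) = p (v)
      rw [h2]
    exact absurd (h.noper this hu) (by omega)

/-- number of edges in `E` incident to `v` -/
noncomputable def dInc (E : Finset (Sym2 V)) (v : V) : ℕ :=
  (E.filter (fun e => v ∈ e)).card

lemma dInc_insert_mem {E : Finset (Sym2 V)} {e : Sym2 V} {v : V} (he : e ∉ E) (hv : v ∈ e) :
    dInc (insert e E) v = dInc E v + 1 := by
  unfold dInc
  rw [Finset.filter_insert, if_pos hv, Finset.card_insert_of_notMem (fun hc => he (Finset.mem_of_mem_filter _ hc))]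

lemma dInc_insert_not_mem {E : Finset (Sym2 V)} {e : Sym2 V} {v : V} (hv : v ∉ e) :
    dInc (insert e E) v = dInc E v := by
  unfold dInc
  rw [Finset.filter_insert, if_neg hv]

lemma dInc_erase_mem {E : Finset (Sym2 V)} {f : Sym2 V} {v : V} (hf : f ∈ E) (hv : v ∈ f) :
    dInc (E.erase f) v + 1 = dInc E v := by
  unfold dInc
  rw [Finset.filter_erase, Finset.card_erase_add_one (by rw [Finset.mem_filter]; exact ⟨hf, hv⟩)]

lemma dInc_erase_not_mem {E : Finset (Sym2 V)} {f : Sym2 V} {v : V} (hv : v ∉ f) :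
    dInc (E.erase f) v = dInc E v := by
  unfold dInc
  rw [Finset.filter_erase]
  have hnm : f ∉ E.filter (fun e => v ∈ e) := fun hc => hv (Finset.mem_filter.mp hc).2
  rw [Finset.erase_eq_of_notMem hnm]

lemma degree_eq_dInc (G : SimpleGraph V) (v : V) :
    G.degree v = dInc G.edgeFinset v := by
  rw [← SimpleGraph.card_incidenceFinset_eq_degree]
  congr 1
  ext e
  rw [SimpleGraph.mem_incidenceFinset, Finset.mem_filter, SimpleGraph.mem_edgeFinset]
  exact ⟨fun h => ⟨h.1, h.2⟩, fun h => ⟨h.1, h.2⟩⟩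

/-- the potential: number of `dInc`-degree-1 vertices plus number of `dInc`-degree-≥3
vertices -/
noncomputable def phiE (E : Finset (Sym2 V)) : ℕ :=
  (Finset.univ.filter (fun v => dInc E v = 1)).card +
    (Finset.univ.filter (fun v => 3 ≤ dInc E v)).card

lemma phi_swap {E : Finset (Sym2 V)} {α β y x : V}
    (hf : s(α,β) ∈ E) (he : s(y,x) ∉ E)
    (dα : dInc E α = 2) (dβ : dInc E β = 2) (dy : dInc E y = 2)
    (hyα : y ≠ α) (hyβ : y ≠ β) (hαβ : α ≠ β) (hxβ : x ≠ β) (hxy : x ≠ y) :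
    phiE E + 2 ≤ phiE (insert s(y,x) (E.erase s(α,β))) := by
  set f : Sym2 V := s(α,β) with hfdef
  set e : Sym2 V := s(y,x) with hedef
  set E' : Finset (Sym2 V) := insert e (E.erase f) with hE'def
  have hef : e ∉ E.erase f := fun hc => he (Finset.mem_of_mem_erase hc)
  have hmemf : ∀ v : V, v ∈ f ↔ (v = α ∨ v = β) := fun v => Sym2.mem_iff
  have hmeme : ∀ v : V, v ∈ e ↔ (v = y ∨ v = x) := fun v => Sym2.mem_iff
  -- unchanged vertices
  have hunch : ∀ v : V, v ≠ α → v ≠ β → v ≠ y → v ≠ x → dInc E' v = dInc E v := by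
    intro v h1 h2 h3 h4
    rw [hE'def, dInc_insert_not_mem (by rw [hmeme]; tauto),
      dInc_erase_not_mem (by rw [hmemf]; tauto)]
  have hd'β : dInc E' β = 1 := by
    rw [hE'def, dInc_insert_not_mem (by rw [hmeme]; push_neg; exact ⟨Ne.symm hyβ, Ne.symm hxβ⟩)]
    have := dInc_erase_mem (v := β) hf (by rw [hmemf]; tauto)
    omega
  have hd'y : dInc E' y = 3 := by
    rw [hE'def, dInc_insert_mem hef (by rw [hmeme]; tauto),
      dInc_erase_not_mem (by rw [hmemf]; push_neg; exact ⟨hyα, hyβ⟩)]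
    omega
  set L := Finset.univ.filter (fun v => dInc E v = 1) with hL
  set B := Finset.univ.filter (fun v => 3 ≤ dInc E v) with hB
  set L' := Finset.univ.filter (fun v => dInc E' v = 1) with hL'
  set B' := Finset.univ.filter (fun v => 3 ≤ dInc E' v) with hB'
  have hyB : y ∉ B := by rw [hB, Finset.mem_filter]; omega
  have hBsub : insert y B ⊆ B' := by
    intro v hv
    rw [Finset.mem_insert] at hv
    rw [hB', Finset.mem_filter]
    refine ⟨Finset.mem_univ v, ?_⟩
    rcases hv with rfl | hv
    · omega
    · rw [hB, Finset.mem_filter] at hv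
      have hvα : v ≠ α := fun hc => by rw [hc, dα] at hv; omega
      have hvβ : v ≠ β := fun hc => by rw [hc, dβ] at hv; omega
      have hvy : v ≠ y := fun hc => by rw [hc, dy] at hv; omega
      by_cases hvx : v = x
      · subst hvx
        rw [hE'def, dInc_insert_mem hef (by rw [hmeme]; tauto),
          dInc_erase_not_mem (by rw [hmemf]; push_neg; exact ⟨hvα, hvβ⟩)]
        omega
      · rw [hunch v hvα hvβ hvy hvx]; omega
  have hBcard : B.card + 1 ≤ B'.card := by
    calc B.card + 1 = (insert y B).card := (Finset.card_insert_of_notMem hyB).symm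
    _ ≤ B'.card := Finset.card_le_card hBsub
  -- now the leaf sets
  have hLcard : L.card + 1 ≤ L'.card := by
    by_cases hxα : x = α
    · -- x = α : L' ⊇ insert β L
      have hsub : insert β L ⊆ L' := by
        intro v hv
        rw [Finset.mem_insert] at hv
        rw [hL', Finset.mem_filter]
        refine ⟨Finset.mem_univ v, ?_⟩
        rcases hv with rfl | hv
        · exact hd'β
        · rw [hL, Finset.mem_filter] at hv
          have hvα : v ≠ α := fun hc => by rw [hc, dα] at hv; omega
          have hvβ : v ≠ β := fun hc => by rw [hc, dβ] at hv; omega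
          have hvy : v ≠ y := fun hc => by rw [hc, dy] at hv; omega
          have hvx : v ≠ x := hxα ▸ hvα
          rw [hunch v hvα hvβ hvy hvx]; omega
      have hβL : β ∉ L := by rw [hL, Finset.mem_filter]; omega
      calc L.card + 1 = (insert β L).card := (Finset.card_insert_of_notMem hβL).symm
      _ ≤ L'.card := Finset.card_le_card hsub
    · -- x ≠ α
      have hd'α : dInc E' α = 1 := by
        rw [hE'def, dInc_insert_not_mem
          (by rw [hmeme]; push_neg; exact ⟨Ne.symm hyα, fun hc => hxα hc.symm⟩)]
        have := dInc_erase_mem (v := α) hf (by rw [hmemf]; tauto)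
        omega
      have hsub : insert α (insert β (L.erase x)) ⊆ L' := by
        intro v hv
        rw [Finset.mem_insert, Finset.mem_insert] at hv
        rw [hL', Finset.mem_filter]
        refine ⟨Finset.mem_univ v, ?_⟩
        rcases hv with rfl | rfl | hv
        · exact hd'α
        · exact hd'β
        · rw [Finset.mem_erase] at hv
          obtain ⟨hvx, hv⟩ := hv
          rw [hL, Finset.mem_filter] at hv
          have hvα : v ≠ α := fun hc => by rw [hc, dα] at hv; omega
          have hvβ : v ≠ β := fun hc => by rw [hc, dβ] at hv; omega
          have hvy : v ≠ y := fun hc => by rw [hc, dy] at hv; omega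
          rw [hunch v hvα hvβ hvy hvx]; omega
      have hβmem : β ∉ L.erase x := by
        rw [Finset.mem_erase, hL, Finset.mem_filter]; omega
      have hαmem : α ∉ insert β (L.erase x) := by
        rw [Finset.mem_insert, Finset.mem_erase, hL, Finset.mem_filter]
        push_neg
        exact ⟨hαβ, fun _ => by omega⟩
      have hLx : L.card ≤ (L.erase x).card + 1 := by
        by_cases hx : x ∈ L
        · rw [Finset.card_erase_add_one hx]
        · rw [Finset.erase_eq_of_notMem hx]; omega
      calc L.card + 1 ≤ (L.erase x).card + 2 := by omega
      _ = (insert α (insert β (L.erase x))).card := by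
          rw [Finset.card_insert_of_notMem hαmem, Finset.card_insert_of_notMem hβmem]
      _ ≤ L'.card := Finset.card_le_card hsub
  have h1 : phiE E = L.card + B.card := rfl
  have h2 : phiE E' = L'.card + B'.card := rfl
  omega

/-- the edge finset of a parent map -/
noncomputable def pedges (r : V) (p : V → V) : Finset (Sym2 V) :=
  (Finset.univ.erase r).image (fun v => s(v, p v))

lemma pedges_eq (h : PValid G r p) : (ptree r p).edgeFinset = pedges r p :=
  ptree_edgeFinset h

lemma mem_desc_iterate {x u : V} {k i : ℕ} (hik : i ≤ k) (hx : p^[k] x = u) :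
    p^[i] x ∈ desc p u := by
  refine ⟨k - i, ?_⟩
  rw [← Function.iterate_add_apply]
  rw [Nat.sub_add_cancel hik]
  exact hx

lemma rehang (h : PValid G r p) {u x z : V} {k : ℕ} (hu : u ≠ r)
    (hx : p^[k] x = u) (hz : z ∉ desc p u) (hadj : G.Adj x z) :
    ∃ p' : V → V, PValid G r p' ∧
      pedges r p' = insert s(x,z) ((pedges r p).erase s(u, p u)) := by
  set c : ℕ → V := fun i => p^[i] x with hc
  have hcdef : ∀ i, c i = p^[i] x := fun i => by rw [hc]
  have hcsucc : ∀ i, c (i + 1) = p (c i) := by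
    intro i; rw [hc]; exact Function.iterate_succ_apply' p i x
  have hcdesc : ∀ i, i ≤ k → c i ∈ desc p u := fun i hi => mem_desc_iterate hi hx
  have hcne_r : ∀ i, i ≤ k → c i ≠ r := by
    intro i hi hir
    have : p^[k - i] (c i) = u := by
      rw [hc, ← Function.iterate_add_apply, Nat.sub_add_cancel hi]; exact hx
    rw [hir, h.iterate_root] at this
    exact hu this.symm
  have hcinj : ∀ i, i ≤ k → ∀ j, j ≤ k → c i = c j → i = j := by
    intro i hi j hj hij
    rcases Nat.lt_trichotomy i j with hlt | heq | hlt
    · exfalso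
      have key : p^[j - i] (c i) = c i := by
        rw [hcdef i, ← Function.iterate_add_apply, Nat.sub_add_cancel (le_of_lt hlt),
          ← hcdef j, ← hcdef i, hij]
      have h0 := h.noper key (hcne_r i hi)
      omega
    · exact heq
    · exfalso
      have key : p^[i - j] (c j) = c j := by
        rw [hcdef j, ← Function.iterate_add_apply, Nat.sub_add_cancel (le_of_lt hlt),
          ← hcdef i, ← hcdef j, ← hij]
      have h0 := h.noper key (hcne_r j hj)
      omega
  have hxz : x ≠ z := fun hc' => G.loopless.irrefl x (hc' ▸ hadj)
  have hxr : x ≠ r := hcne_r 0 (Nat.zero_le k)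
  -- the new parent map
  set p' : V → V := fun w =>
    if hw : ∃ i, i < k ∧ p^[i+1] x = w then p^[Nat.find hw] x
    else if w = x then z else p w with hp'
  have hp'chain : ∀ i, i < k → p' (c (i+1)) = c i := by
    intro i hik
    have hex : ∃ j, j < k ∧ p^[j+1] x = c (i+1) := ⟨i, hik, rfl⟩
    rw [hp']
    simp only [dif_pos hex]
    have hspec := Nat.find_spec hex
    have hlt := (Nat.find_spec hex).1
    have := hcinj (Nat.find hex + 1) (by omega) (i+1) (by omega) hspec.2
    have : Nat.find hex = i := by omega
    rw [this]
  have hp'x : p' x = z := by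
    have hnex : ¬∃ i, i < k ∧ p^[i+1] x = x := by
      rintro ⟨i, hik, hi⟩
      have := hcinj (i+1) (by omega) 0 (by omega) hi
      omega
    show (if hw : ∃ i, i < k ∧ p^[i+1] x = x then p^[Nat.find hw] x
      else if x = x then z else p x) = z
    rw [dif_neg hnex, if_pos rfl]
  have hp'else : ∀ w, w ≠ x → (¬∃ i, i < k ∧ p^[i+1] x = w) → p' w = p w := by
    intro w hwx hwc
    rw [hp']
    simp only [dif_neg hwc, if_neg hwx]
  have hnotchain_else : ∀ w, (∀ i, i ≤ k → c i ≠ w) → p' w = p w := by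
    intro w hw
    refine hp'else w (fun hwx => hw 0 (Nat.zero_le k) hwx.symm) ?_
    rintro ⟨i, hik, hi⟩
    exact hw (i+1) (by omega) hi
  have hdesc_chain : ∀ w, w ∉ desc p u → (∀ i, i ≤ k → c i ≠ w) := by
    intro w hw i hi hciw
    exact hw (hciw ▸ hcdesc i hi)
  -- out-of-subtree vertices keep their parent and stay out
  have hout : ∀ w, w ∉ desc p u → p' w = p w := by
    intro w hw
    exact hnotchain_else w (hdesc_chain w hw)
  -- validity
  have hval : PValid G r p' := by
    have hrnotdesc : r ∉ desc p u := root_not_mem_desc h hu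
    refine ⟨?_, ?_, ?_⟩
    · rw [hout r hrnotdesc, h.1]
    · intro v hv
      by_cases hvdesc : ∃ i, i < k ∧ p^[i+1] x = v
      · obtain ⟨i, hik, hi⟩ := hvdesc
        have : v = c (i+1) := hi.symm
        subst this
        rw [hp'chain i hik]
        have := h.2.1 (c i) (hcne_r i (by omega))
        rw [← hcsucc i] at this
        exact this.symm
      · by_cases hvx : v = x
        · subst hvx; rw [hp'x]; exact hadj
        · rw [hp'else v hvx hvdesc]
          exact h.2.1 v hv
    · -- reachability
      have reach_out : ∀ n w, pdep h w = n → w ∉ desc p u → ∃ m, p'^[m] w = r := by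
        intro n
        induction n using Nat.strong_induction_on with
        | _ n ih =>
          intro w hn hw
          by_cases hwr : w = r
          · exact ⟨0, hwr⟩
          · have h1 : p' w = p w := hout w hw
            have h2 : p w ∉ desc p u := not_mem_desc_parent h hw
            obtain ⟨m, hm⟩ := ih (pdep h (p w)) (hn ▸ pdep_parent_lt h hwr) (p w) rfl h2
            exact ⟨m + 1, by rw [Function.iterate_succ_apply, h1, hm]⟩
      have reach_z : ∃ m, p'^[m] z = r := reach_out (pdep h z) z rfl hz
      have reach_chain : ∀ i, i ≤ k → ∃ m, p'^[m] (c i) = x := by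
        intro i
        induction i with
        | zero => exact fun _ => ⟨0, rfl⟩
        | succ n ihn =>
          intro hik
          obtain ⟨m, hm⟩ := ihn (by omega)
          exact ⟨m + 1, by rw [Function.iterate_succ_apply, hp'chain n (by omega), hm]⟩
      have reach_x : ∃ m, p'^[m] x = r := by
        obtain ⟨m, hm⟩ := reach_z
        exact ⟨m + 1, by rw [Function.iterate_succ_apply, hp'x, hm]⟩
      have reach_in : ∀ n w, pdep h w = n → w ∈ desc p u → ∃ m, p'^[m] w = r := by
        intro n
        induction n using Nat.strong_induction_on with
        | _ n ih =>
          intro w hn hw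
          by_cases hwc : ∃ i, i ≤ k ∧ c i = w
          · obtain ⟨i, hik, hi⟩ := hwc
            obtain ⟨m1, hm1⟩ := reach_chain i hik
            obtain ⟨m2, hm2⟩ := reach_x
            exact ⟨m2 + m1, by rw [Function.iterate_add_apply, ← hi, hm1, hm2]⟩
          · push_neg at hwc
            have hwu : w ≠ u := by
              intro hwu
              refine hwc k (le_refl k) ?_
              rw [hcdef k, hx]
              exact hwu.symm
            have hwr : w ≠ r := fun hwr => hrnotdesc (hwr ▸ hw)
            have h1 : p' w = p w := hnotchain_else w (fun i hi hci => hwc i hi hci)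
            have h2 : p w ∈ desc p u := parent_mem_desc hw hwu
            obtain ⟨m, hm⟩ := ih (pdep h (p w)) (hn ▸ pdep_parent_lt h hwr) (p w) rfl h2
            exact ⟨m + 1, by rw [Function.iterate_succ_apply, h1, hm]⟩
      intro w
      by_cases hw : w ∈ desc p u
      · exact reach_in (pdep h w) w rfl hw
      · exact reach_out (pdep h w) w rfl hw
  -- edge set identity
  refine ⟨p', hval, ?_⟩
  have hpu_ne_u : p u ≠ u := h.parent_ne hu
  have hpu_notdesc : p u ∉ desc p u := parent_not_mem_desc h hu
  ext ed
  simp only [pedges, Finset.mem_image, Finset.mem_erase, Finset.mem_univ, and_true,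
    Finset.mem_insert]
  constructor
  · rintro ⟨w, hwr, rfl⟩
    by_cases hwx : w = x
    · subst hwx
      left; rw [hp'x]
    · by_cases hwc : ∃ i, i < k ∧ p^[i+1] x = w
      · obtain ⟨i, hik, hi⟩ := hwc
        subst hi
        rw [hp'chain i hik]
        right
        constructor
        · -- edge (c(i+1), c i) ≠ (u, p u)
          intro heq
          rw [Sym2.eq_iff] at heq
          rcases heq with ⟨h1, h2⟩ | ⟨h1, h2⟩
          · exact hpu_notdesc (h2 ▸ hcdesc i (by omega))
          · have := hcinj i (by omega) k (le_refl k) (by rw [h2, hcdef k, hx])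
            omega
        · exact ⟨c i, hcne_r i (by omega), by rw [← hcsucc i, Sym2.eq_swap]⟩
      · rw [hp'else w hwx hwc]
        right
        constructor
        · intro heq
          rw [Sym2.eq_iff] at heq
          rcases heq with ⟨h1, h2⟩ | ⟨h1, h2⟩
          · -- w = u: then w is on the chain
            rcases Nat.eq_zero_or_pos k with hk0 | hk0
            · apply hwx
              rw [h1, ← hx, hk0, Function.iterate_zero_apply]
            · apply hwc
              refine ⟨k - 1, by omega, ?_⟩
              have hkk : k - 1 + 1 = k := by omega
              rw [hkk, hx]
              exact h1.symm
          · -- p w = u and w = p u : contradiction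
            exact hpu_notdesc (h1 ▸ ⟨1, h2⟩)
        · exact ⟨w, hwr, rfl⟩
  · rintro (rfl | ⟨hne, w, hwr, rfl⟩)
    · exact ⟨x, hxr, by rw [hp'x]⟩
    · -- an old edge (w, p w) distinct from (u, p u)
      by_cases hwc : ∃ i, i ≤ k ∧ c i = w
      · obtain ⟨i, hik, hi⟩ := hwc
        subst hi
        have hik' : i < k := by
          rcases Nat.lt_or_ge i k with h' | h'
          · exact h'
          · exfalso
            have : i = k := by omega
            subst this
            apply hne
            rw [hcdef i, hx]
        refine ⟨c (i+1), hcne_r (i+1) (by omega), ?_⟩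
        rw [hp'chain i hik', ← hcsucc i, Sym2.eq_swap]
      · push_neg at hwc
        refine ⟨w, hwr, ?_⟩
        rw [hnotchain_else w hwc]

lemma dInc_pedges (h : PValid G r p) (v : V) :
    dInc (pedges r p) v = (ptree r p).degree v := by
  rw [← pedges_eq h, ← degree_eq_dInc]

lemma chain_inj_of_ne_r (h : PValid G r p) {v : V} {m : ℕ}
    (hner : ∀ i ≤ m, p^[i] v ≠ r) :
    ∀ i ≤ m, ∀ j ≤ m, p^[i] v = p^[j] v → i = j := by
  intro i hi j hj hij
  rcases Nat.lt_trichotomy i j with hlt | heq | hlt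
  · exfalso
    have key : p^[j - i] (p^[i] v) = p^[i] v := by
      rw [← Function.iterate_add_apply, Nat.sub_add_cancel (le_of_lt hlt), ← hij]
    have h0 := h.noper key (hner i hi)
    omega
  · exact heq
  · exfalso
    have key : p^[i - j] (p^[j] v) = p^[j] v := by
      rw [← Function.iterate_add_apply, Nat.sub_add_cancel (le_of_lt hlt), hij]
    have h0 := h.noper key (hner j hj)
    omega

lemma mem_pedges_iff (h : PValid G r p) {a b : V} :
    s(a, b) ∈ pedges r p ↔ ((a ≠ r ∧ p a = b) ∨ (b ≠ r ∧ p b = a)) := by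
  rw [← pedges_eq h, SimpleGraph.mem_edgeFinset, SimpleGraph.mem_edgeSet, ptree_adj]
  constructor
  · rintro ⟨_, h2⟩; exact h2
  · rintro (⟨har, hpa⟩ | ⟨hbr, hpb⟩)
    · exact ⟨fun hab => h.parent_ne har (hpa ▸ hab ▸ rfl), Or.inl ⟨har, hpa⟩⟩
    · exact ⟨fun hab => h.parent_ne hbr (hpb ▸ hab ▸ rfl), Or.inr ⟨hbr, hpb⟩⟩

lemma children_eq_singleton (h : PValid G r p) {a b : V} (ha : a ≠ r)
    (hd : (ptree r p).degree a = 2) (hb : b ∈ children r p a) :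
    children r p a = {b} := by
  have hcard : (children r p a).card = 1 := by
    have := ptree_degree h a
    rw [if_neg ha] at this
    omega
  obtain ⟨t, ht⟩ := Finset.card_eq_one.mp hcard
  rw [ht] at hb ⊢
  rw [Finset.mem_singleton] at hb
  rw [hb]

lemma desc_into_child (h : PValid G r p) {a w : V} (ha : a ≠ r)
    (hw : w ∈ desc p a) (hwa : w ≠ a) :
    ∃ b, b ∈ children r p a ∧ w ∈ desc p b := by
  obtain ⟨k, hk⟩ := hw
  cases k with
  | zero => exact absurd hk hwa
  | succ n =>
    refine ⟨p^[n] w, ?_, ⟨n, rfl⟩⟩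
    rw [mem_children]
    constructor
    · intro hr
      rw [Function.iterate_succ_apply', hr, h.1] at hk
      exact ha hk.symm
    · rw [← Function.iterate_succ_apply' p n w]
      exact hk

lemma no7chain (h : PValid G r p) (hG : NoDeg2Path3 G)
    (hmax : ∀ q : V → V, PValid G r q → phiE (pedges r q) ≤ phiE (pedges r p))
    {v : V} (hchain : ∀ i ≤ 6, (ptree r p).degree (p^[i] v) = 2 ∧ p^[i] v ≠ r) :
    False := by
  set c : ℕ → V := fun i => p^[i] v with hc
  have hcdef : ∀ i, c i = p^[i] v := fun i => by rw [hc]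
  have hdeg : ∀ i ≤ 6, (ptree r p).degree (c i) = 2 := fun i hi => (hchain i hi).1
  have hner : ∀ i ≤ 6, c i ≠ r := fun i hi => (hchain i hi).2
  have hcsucc : ∀ i, c (i + 1) = p (c i) := by
    intro i; rw [hcdef, hcdef]; exact Function.iterate_succ_apply' p i v
  have hinj : ∀ s ≤ 6, ∀ t ≤ 6, c s = c t → s = t := by
    intro s hs t ht hst
    exact chain_inj_of_ne_r h (fun i hi => hner i hi) s hs t ht hst
  -- find the vertex of G-degree ≠ 2 among c 2, c 3, c 4
  have hGadj : ∀ i ≤ 5, G.Adj (c i) (c (i+1)) := by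
    intro i hi
    rw [hcsucc i]
    exact h.2.1 (c i) (hner i (by omega))
  obtain ⟨j, hj2, hj4, hjcard⟩ :
      ∃ j, 2 ≤ j ∧ j ≤ 4 ∧ (G.neighborSet (c j)).ncard ≠ 2 := by
    by_contra hcon
    push_neg at hcon
    exact hG ⟨c 2, c 3, c 4, fun hc24 => by have := hinj 2 (by omega) 4 (by omega) hc24; omega,
      hGadj 2 (by omega), hGadj 3 (by omega),
      hcon 2 (by omega) (by omega), hcon 3 (by omega) (by omega),
      hcon 4 (by omega) (by omega)⟩
  -- index arithmetic
  have e1 : j - 2 + 1 = j - 1 := by omega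
  have e2 : j - 1 + 1 = j := by omega
  have hp01 : p (c (j-2)) = c (j-1) := by rw [← hcsucc (j-2), e1]
  have hp12 : p (c (j-1)) = c j := by rw [← hcsucc (j-1), e2]
  have hp23 : p (c j) = c (j+1) := (hcsucc j).symm
  have hp34 : p (c (j+1)) = c (j+2) := (hcsucc (j+1)).symm
  -- the two tree neighbours of c j
  have hnbr1 : G.Adj (c j) (c (j+1)) := hGadj j (by omega)
  have hnbr2 : G.Adj (c j) (c (j-1)) := by
    have := hGadj (j-1) (by omega)
    rw [e2] at this
    exact this.symm
  -- a third G-neighbour xx of c j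
  obtain ⟨xx, hxxadj, hxx1, hxx2⟩ :
      ∃ xx, G.Adj (c j) xx ∧ xx ≠ c (j+1) ∧ xx ≠ c (j-1) := by
    by_contra hcon
    push_neg at hcon
    apply hjcard
    have hNeq : G.neighborSet (c j) = {c (j+1), c (j-1)} := by
      apply Set.Subset.antisymm
      · intro t ht
        rw [SimpleGraph.mem_neighborSet] at ht
        by_cases ht1 : t = c (j+1)
        · exact Or.inl ht1
        · exact Or.inr (hcon t ht ht1)
      · intro t ht
        rcases ht with rfl | ht
        · exact hnbr1
        · rw [Set.mem_singleton_iff] at ht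
          subst ht
          exact hnbr2
    rw [hNeq]
    exact Set.ncard_pair (fun hcc => by have := hinj (j+1) (by omega) (j-1) (by omega) hcc; omega)
  have hxxj : xx ≠ c j := fun hcc => G.loopless.irrefl (c j) (hcc ▸ hxxadj)
  -- children facts
  have hchild12 : c (j-2) ∈ children r p (c (j-1)) :=
    mem_children.mpr ⟨hner (j-2) (by omega), hp01⟩
  have hchild23 : c (j-1) ∈ children r p (c j) :=
    mem_children.mpr ⟨hner (j-1) (by omega), hp12⟩
  have hchild34 : c j ∈ children r p (c (j+1)) :=
    mem_children.mpr ⟨hner j (by omega), hp23⟩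
  -- the new edge is not a tree edge
  have henew : s(c j, xx) ∉ pedges r p := by
    rw [mem_pedges_iff h]
    rintro (⟨hjr, hpj⟩ | ⟨hxxr, hpxx⟩)
    · rw [hp23] at hpj
      exact hxx1 hpj.symm
    · have hmem : xx ∈ children r p (c j) := mem_children.mpr ⟨hxxr, hpxx⟩
      rw [children_eq_singleton h (hner j (by omega)) (hdeg j (by omega)) hchild23,
        Finset.mem_singleton] at hmem
      exact hxx2 hmem
  have hdv : ∀ i ≤ 6, dInc (pedges r p) (c i) = 2 := by
    intro i hi
    rw [dInc_pedges h]
    exact hdeg i hi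
  by_cases hcase : xx ∈ desc p (c (j-1))
  · -- case (i) : cut below, at c (j-2)
    obtain ⟨b, hbmem, hxxb⟩ := desc_into_child h (hner (j-1) (by omega)) hcase hxx2
    have hb : b = c (j-2) := by
      have := children_eq_singleton h (hner (j-1) (by omega)) (hdeg (j-1) (by omega)) hchild12
      rw [this, Finset.mem_singleton] at hbmem
      exact hbmem
    subst hb
    obtain ⟨k, hk⟩ := hxxb
    have hz : c j ∉ desc p (c (j-2)) := by
      intro hmem
      have hrev : c (j-2) ∈ desc p (c j) := by
        refine ⟨2, ?_⟩
        show p (p (c (j-2))) = c j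
        rw [hp01, hp12]
      have := desc_antisymm h hmem hrev
      have := hinj j (by omega) (j-2) (by omega) this
      omega
    obtain ⟨p'', hval'', hE''⟩ := rehang h (hner (j-2) (by omega)) hk hz hxxadj.symm
    have hswap := phi_swap (E := pedges r p) (α := c (j-2)) (β := c (j-1)) (y := c j) (x := xx)
      ((mem_pedges_iff h).mpr (Or.inl ⟨hner (j-2) (by omega), hp01⟩)) henew
      (hdv (j-2) (by omega)) (hdv (j-1) (by omega)) (hdv j (by omega))
      (fun hcc => by have := hinj j (by omega) (j-2) (by omega) hcc; omega)
      (fun hcc => by have := hinj j (by omega) (j-1) (by omega) hcc; omega)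
      (fun hcc => by have := hinj (j-2) (by omega) (j-1) (by omega) hcc; omega)
      hxx2 hxxj
    rw [hp01, Sym2.eq_swap (a := xx) (b := c j)] at hE''
    rw [← hE''] at hswap
    have := hmax p'' hval''
    omega
  · -- case (ii) : cut above, at c (j+1)
    have hz : xx ∉ desc p (c (j+1)) := by
      intro hmem
      obtain ⟨b, hbmem, hxxb⟩ := desc_into_child h (hner (j+1) (by omega)) hmem hxx1
      have hb : b = c j := by
        have := children_eq_singleton h (hner (j+1) (by omega)) (hdeg (j+1) (by omega)) hchild34
        rw [this, Finset.mem_singleton] at hbmem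
        exact hbmem
      subst hb
      obtain ⟨b2, hb2mem, hxxb2⟩ := desc_into_child h (hner j (by omega)) hxxb hxxj
      have hb2 : b2 = c (j-1) := by
        have := children_eq_singleton h (hner j (by omega)) (hdeg j (by omega)) hchild23
        rw [this, Finset.mem_singleton] at hb2mem
        exact hb2mem
      subst hb2
      exact hcase hxxb2
    have hk : p^[1] (c j) = c (j+1) := by
      rw [Function.iterate_one]
      exact hp23
    obtain ⟨p'', hval'', hE''⟩ := rehang h (hner (j+1) (by omega)) hk hz hxxadj
    have hswap := phi_swap (E := pedges r p) (α := c (j+2)) (β := c (j+1)) (y := c j) (x := xx)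
      ((mem_pedges_iff h).mpr (Or.inr ⟨hner (j+1) (by omega), hp34⟩)) henew
      (hdv (j+2) (by omega)) (hdv (j+1) (by omega)) (hdv j (by omega))
      (fun hcc => by have := hinj j (by omega) (j+2) (by omega) hcc; omega)
      (fun hcc => by have := hinj j (by omega) (j+1) (by omega) hcc; omega)
      (fun hcc => by have := hinj (j+2) (by omega) (j+1) (by omega) hcc; omega)
      hxx1 hxxj
    rw [hp34, Sym2.eq_swap (a := c (j+1)) (b := c (j+2))] at hE''
    rw [← hE''] at hswap
    have := hmax p'' hval''
    omega

lemma children_sum :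
    ∑ a : V, (children r p a).card = Fintype.card V - 1 := by
  have hpart : ∀ a : V, children r p a = (Finset.univ.erase r).filter (fun u => p u = a) := by
    intro a
    ext u
    simp only [mem_children, Finset.mem_filter, Finset.mem_erase, Finset.mem_univ, and_true,
      true_and]
  have := Finset.card_eq_sum_card_fiberwise
    (f := p) (s := Finset.univ.erase r) (t := Finset.univ) (fun x _ => Finset.mem_univ (p x))
  rw [Finset.card_erase_of_mem (Finset.mem_univ r), Finset.card_univ] at this
  rw [this]
  apply Finset.sum_congr rfl
  intro a _
  rw [hpart a]

lemma deg_pos (h : PValid G r p) (hcard : 2 ≤ Fintype.card V) (v : V) :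
    1 ≤ (ptree r p).degree v := by
  rw [ptree_degree h v]
  by_cases hv : v = r
  · rw [if_pos hv]
    obtain ⟨v0, hv0⟩ := Fintype.exists_ne_of_one_lt_card (by omega) r
    have hk : 1 ≤ pdep h v0 := pdep_pos h hv0
    have hu : p^[pdep h v0 - 1] v0 ∈ children r p v := by
      rw [mem_children]
      constructor
      · intro hr
        have hlt : pdep h v0 - 1 < pdep h v0 := by omega
        have hmin : ¬ p^[pdep h v0 - 1] v0 = r := Nat.find_min (h.2.2 v0) hlt
        exact hmin hr
      · rw [← Function.iterate_succ_apply' p (pdep h v0 - 1) v0, Nat.succ_eq_add_one]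
        have heq : pdep h v0 - 1 + 1 = pdep h v0 := by omega
        rw [heq, hv]
        exact pdep_spec h v0
    have := Finset.card_pos.mpr ⟨_, hu⟩
    omega
  · rw [if_neg hv]
    omega

lemma leaf_ge_branch (h : PValid G r p) (hcard : 2 ≤ Fintype.card V) :
    (Finset.univ.filter (fun v => 3 ≤ (ptree r p).degree v)).card + 2 ≤
      (Finset.univ.filter (fun v => (ptree r p).degree v = 1)).card := by
  set D : V → ℕ := fun v => (ptree r p).degree v with hD
  set L := Finset.univ.filter (fun v => D v = 1) with hLdef
  set D2 := Finset.univ.filter (fun v => D v = 2) with hD2def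
  set B := Finset.univ.filter (fun v => 3 ≤ D v) with hBdef
  have hdegpos : ∀ v, 1 ≤ D v := fun v => deg_pos h hcard v
  have hdisj1 : Disjoint L D2 := by
    rw [Finset.disjoint_left]
    intro a haL haD2
    rw [hLdef, Finset.mem_filter] at haL
    rw [hD2def, Finset.mem_filter] at haD2
    omega
  have hdisj2 : Disjoint (L ∪ D2) B := by
    rw [Finset.disjoint_left]
    intro a haU haB
    rw [Finset.mem_union, hLdef, hD2def, Finset.mem_filter, Finset.mem_filter] at haU
    rw [hBdef, Finset.mem_filter] at haB
    omega
  have huniv : (Finset.univ : Finset V) = (L ∪ D2) ∪ B := by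
    ext v
    simp only [Finset.mem_univ, true_iff, Finset.mem_union, hLdef, hD2def, hBdef,
      Finset.mem_filter, Finset.mem_univ, true_and]
    have := hdegpos v
    omega
  have hedge : ∑ v : V, D v = 2 * (Fintype.card V - 1) := by
    rw [hD]
    have h1 := SimpleGraph.sum_degrees_eq_twice_card_edges (ptree r p)
    rw [ptree_card_edgeFinset h] at h1
    exact h1
  have hsplit : ∑ v : V, D v = ∑ v ∈ L, D v + ∑ v ∈ D2, D v + ∑ v ∈ B, D v := by
    rw [show (Finset.univ : Finset V) = (L ∪ D2) ∪ B from huniv,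
      Finset.sum_union hdisj2, Finset.sum_union hdisj1]
  have hsumL : ∑ v ∈ L, D v = L.card := by
    rw [Finset.sum_congr rfl (fun v hv => (Finset.mem_filter.mp hv).2)]
    simp
    rfl
  have hsumD2 : ∑ v ∈ D2, D v = 2 * D2.card := by
    rw [Finset.sum_congr rfl (fun v hv => (Finset.mem_filter.mp hv).2)]
    simp [Nat.mul_comm]
    rfl
  have hsumB : 3 * B.card ≤ ∑ v ∈ B, D v := by
    calc 3 * B.card = B.card * 3 := by ring
    _ = B.card • 3 := by simp
    _ ≤ ∑ v ∈ B, D v := Finset.card_nsmul_le_sum B D 3 (fun v hv => (Finset.mem_filter.mp hv).2)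
  have hcards : L.card + D2.card + B.card = Fintype.card V := by
    rw [← Finset.card_univ, huniv, Finset.card_union_of_disjoint hdisj2,
      Finset.card_union_of_disjoint hdisj1]
  omega

lemma down_unique (h : PValid G r p) :
    ∀ t (v v' : V), (∀ i ≤ t, (ptree r p).degree (p^[i] v) = 2 ∧ p^[i] v ≠ r) →
    (∀ i ≤ t, (ptree r p).degree (p^[i] v') = 2 ∧ p^[i] v' ≠ r) →
    p^[t] v = p^[t] v' → v = v' := by
  intro t
  induction t with
  | zero => intro v v' _ _ he; exact he
  | succ t ih =>
    intro v v' hv hv' he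
    have hb : p^[t] v ∈ children r p (p^[t+1] v) :=
      mem_children.mpr ⟨(hv t (by omega)).2, by rw [← Function.iterate_succ_apply' p t v]⟩
    have hb' : p^[t] v' ∈ children r p (p^[t+1] v) :=
      mem_children.mpr ⟨(hv' t (by omega)).2, by
        rw [← Function.iterate_succ_apply' p t v', he]⟩
    have hsingle := children_eq_singleton h (hv (t+1) le_rfl).2 (hv (t+1) le_rfl).1 hb
    rw [hsingle, Finset.mem_singleton] at hb'
    exact ih v v' (fun i hi => hv i (by omega)) (fun i hi => hv' i (by omega)) hb'.symm

lemma count14 (h : PValid G r p) (hcard : 2 ≤ Fintype.card V)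
    (hno7 : ∀ v : V, ¬ (∀ i ≤ 6, (ptree r p).degree (p^[i] v) = 2 ∧ p^[i] v ≠ r)) :
    Fintype.card V + 13 ≤
      14 * (Finset.univ.filter (fun v => (ptree r p).degree v = 1)).card := by
  set D : V → ℕ := fun v => (ptree r p).degree v with hD
  set P : V → Prop := fun a => ¬(D a = 2 ∧ a ≠ r) with hP
  set L := Finset.univ.filter (fun v => D v = 1) with hLdef
  set B := Finset.univ.filter (fun v => 3 ≤ D v) with hBdef
  set D2all := Finset.univ.filter (fun v => D v = 2) with hD2alldef
  set D2' := Finset.univ.filter (fun v => ¬ P v) with hD2'def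
  set A' := Finset.univ.filter (fun v => P v) with hA'def
  -- the "m" function: first ancestor (inclusive) failing the deg-2 chain condition
  have hex : ∀ v : V, ∃ m, P (p^[m] v) := by
    intro v
    refine ⟨pdep h v, ?_⟩
    rintro ⟨-, hne⟩
    exact hne (pdep_spec h v)
  set mf : V → ℕ := fun v => Nat.find (hex v) with hmf
  have hmf_spec : ∀ v, P (p^[mf v] v) := fun v => Nat.find_spec (hex v)
  have hmf_min : ∀ v, ∀ i, i < mf v → (D (p^[i] v) = 2 ∧ p^[i] v ≠ r) := by
    intro v i hi
    have := Nat.find_min (hex v) (m := i) hi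
    rw [hP, not_not] at this
    exact this
  have hmf_le : ∀ v, mf v ≤ 6 := by
    intro v
    by_contra hgt
    exact hno7 v (fun i hi => hmf_min v i (by omega))
  have hmf_pos : ∀ v ∈ D2', 1 ≤ mf v := by
    intro v hv
    rw [hD2'def, Finset.mem_filter, hP, not_not] at hv
    by_contra h0
    have : mf v = 0 := by omega
    have hspec := hmf_spec v
    rw [this] at hspec
    rw [hP] at hspec
    exact hspec ⟨hv.2.1, hv.2.2⟩
  -- the fiber map
  set C := Finset.univ.filter (fun c => (D c = 2 ∧ c ≠ r) ∧ P (p c)) with hCdef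
  set F : V → V × ℕ := fun v => (p^[mf v - 1] v, mf v - 1) with hF
  have hmaps : ∀ v ∈ D2', F v ∈ C ×ˢ Finset.range 6 := by
    intro v hv
    have h1 := hmf_pos v hv
    simp only [hF]
    rw [Finset.mem_product]
    constructor
    · rw [hCdef, Finset.mem_filter]
      refine ⟨Finset.mem_univ _, hmf_min v (mf v - 1) (by omega), ?_⟩
      rw [← Function.iterate_succ_apply' p (mf v - 1) v, Nat.succ_eq_add_one]
      have heq : mf v - 1 + 1 = mf v := by omega
      rw [heq]
      exact hmf_spec v
    · rw [Finset.mem_range]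
      have := hmf_le v
      omega
  have hinjF : Set.InjOn F D2' := by
    intro v hv v' hv' heq
    simp only [hF, Prod.mk.injEq] at heq
    obtain ⟨h2, h1⟩ := heq
    rw [← h1] at h2
    refine down_unique h (mf v - 1) v v' ?_ ?_ h2
    · intro i hi
      exact hmf_min v i (by have := hmf_pos v (by simpa using hv); omega)
    · intro i hi
      rw [h1] at hi
      exact hmf_min v' i (by have := hmf_pos v' (by simpa using hv'); omega)
  have hD2'card : D2'.card ≤ C.card * 6 := by
    calc D2'.card ≤ (C ×ˢ Finset.range 6).card :=
      Finset.card_le_card_of_injOn F hmaps hinjF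
    _ = C.card * 6 := by rw [Finset.card_product, Finset.card_range]
  -- bound C.card by the number of children of A'-vertices
  have hCsub : C ⊆ A'.biUnion (children r p) := by
    intro c hc
    rw [hCdef, Finset.mem_filter] at hc
    obtain ⟨_, ⟨hc2, hcr⟩, hPc⟩ := hc
    rw [Finset.mem_biUnion]
    exact ⟨p c, by rw [hA'def, Finset.mem_filter]; exact ⟨Finset.mem_univ _, hPc⟩,
      mem_children.mpr ⟨hcr, rfl⟩⟩
  have hCcard : C.card ≤ ∑ a ∈ A', (children r p a).card :=
    le_trans (Finset.card_le_card hCsub) (Finset.card_biUnion_le)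
  -- children sums
  have hchsum : ∑ a ∈ A', (children r p a).card + ∑ a ∈ D2', (children r p a).card =
      Fintype.card V - 1 := by
    rw [hA'def, hD2'def, Finset.sum_filter_add_sum_filter_not Finset.univ P
      (fun a => (children r p a).card)]
    exact children_sum
  have hD2'ch : ∑ a ∈ D2', (children r p a).card = D2'.card := by
    have hone : ∀ a ∈ D2', (children r p a).card = 1 := by
      intro a ha
      rw [hD2'def, Finset.mem_filter, hP, not_not] at ha
      have hdeg := ptree_degree h a
      rw [if_neg ha.2.2] at hdeg
      have hDa : D a = (ptree r p).degree a := rfl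
      omega
    calc ∑ a ∈ D2', (children r p a).card = ∑ _a ∈ D2', 1 := Finset.sum_congr rfl hone
    _ = D2'.card := by simp
  -- partition counts
  have hdegpos : ∀ v, 1 ≤ D v := fun v => deg_pos h hcard v
  have hLB := leaf_ge_branch h hcard
  have hD2sub : D2all ⊆ insert r D2' := by
    intro v hv
    rw [hD2alldef, Finset.mem_filter] at hv
    rw [Finset.mem_insert]
    by_cases hvr : v = r
    · exact Or.inl hvr
    · right
      rw [hD2'def, Finset.mem_filter, hP, not_not]
      exact ⟨Finset.mem_univ _, hv.2, hvr⟩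
  have hD2cards : D2all.card ≤ D2'.card + 1 := by
    calc D2all.card ≤ (insert r D2').card := Finset.card_le_card hD2sub
    _ ≤ D2'.card + 1 := Finset.card_insert_le r D2'
  have hdisj1 : Disjoint L D2all := by
    rw [Finset.disjoint_left]
    intro a haL haD2
    rw [hLdef, Finset.mem_filter] at haL
    rw [hD2alldef, Finset.mem_filter] at haD2
    omega
  have hdisj2 : Disjoint (L ∪ D2all) B := by
    rw [Finset.disjoint_left]
    intro a haU haB
    rw [Finset.mem_union, hLdef, hD2alldef, Finset.mem_filter, Finset.mem_filter] at haU
    rw [hBdef, Finset.mem_filter] at haB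
    omega
  have huniv : (Finset.univ : Finset V) = (L ∪ D2all) ∪ B := by
    ext v
    simp only [Finset.mem_univ, true_iff, Finset.mem_union, hLdef, hD2alldef, hBdef,
      Finset.mem_filter, Finset.mem_univ, true_and]
    have := hdegpos v
    omega
  have hcards : L.card + D2all.card + B.card = Fintype.card V := by
    rw [← Finset.card_univ, huniv, Finset.card_union_of_disjoint hdisj2,
      Finset.card_union_of_disjoint hdisj1]
  have hL1 : (Finset.univ.filter (fun v => (ptree r p).degree v = 1)).card = L.card := rfl
  have hB1 : (Finset.univ.filter (fun v => 3 ≤ (ptree r p).degree v)).card = B.card := rfl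
  rw [hL1]
  rw [hL1, hB1] at hLB
  omega

lemma exists_pvalid (hconn : G.Connected) : ∃ (r : V) (p : V → V), PValid G r p := by
  obtain ⟨r⟩ := hconn.nonempty
  have key : ∀ v : V, ∃ u, (v = r ∧ u = v) ∨
      (v ≠ r ∧ G.Adj v u ∧ G.dist u r < G.dist v r) := by
    intro v
    by_cases hv : v = r
    · exact ⟨v, Or.inl ⟨hv, rfl⟩⟩
    · obtain ⟨W, hW⟩ := (hconn v r).exists_walk_length_eq_dist
      cases W with
      | nil => exact absurd rfl hv
      | @cons _ u _ hadj W' =>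
        refine ⟨u, Or.inr ⟨hv, hadj, ?_⟩⟩
        have h1 : G.dist u r ≤ W'.length := SimpleGraph.dist_le W'
        have h2 : (W'.cons hadj).length = W'.length + 1 := SimpleGraph.Walk.length_cons _ _
        omega
  choose p hp using key
  have hroot : p r = r := by
    rcases hp r with ⟨_, h2⟩ | ⟨h1, _⟩
    · exact h2
    · exact absurd rfl h1
  refine ⟨r, p, hroot, ?_, ?_⟩
  · intro v hv
    rcases hp v with ⟨h1, _⟩ | ⟨_, h2, _⟩
    · exact absurd h1 hv
    · exact h2
  · intro v
    generalize hn : G.dist v r = n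
    induction n using Nat.strong_induction_on generalizing v with
    | _ n ih =>
      by_cases hv : v = r
      · exact ⟨0, hv⟩
      · rcases hp v with ⟨h1, _⟩ | ⟨_, _, h3⟩
        · exact absurd h1 hv
        · obtain ⟨k, hk⟩ := ih (G.dist (p v) r) (hn ▸ h3) (p v) rfl
          exact ⟨k + 1, by rw [Function.iterate_succ_apply, hk]⟩

lemma ncard_neighborSet_eq_degree (T : SimpleGraph V) (v : V) :
    (T.neighborSet v).ncard = T.degree v := by
  rw [← SimpleGraph.card_neighborFinset_eq_degree]
  rw [Set.ncard_eq_toFinset_card']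
  congr 1

lemma one_le_vertexWeight (w : Sym2 V → ℕ)
    (hinc : ∀ v : V, ∃ e ∈ G.edgeSet, v ∈ e ∧ w e = 1) (v : V) :
    1 ≤ vertexWeight G w v := by
  obtain ⟨e₀, he₀, hve₀, hwe₀⟩ := hinc v
  have hset : {e ∈ G.edgeSet | v ∈ e} =
      ↑(Finset.univ.filter (fun e : Sym2 V => e ∈ G.edgeSet ∧ v ∈ e)) := by
    ext e
    simp [Set.mem_setOf_eq]
  rw [vertexWeight, hset, finsum_mem_coe_finset]
  calc 1 = w e₀ := hwe₀.symm
  _ ≤ ∑ e ∈ Finset.univ.filter (fun e : Sym2 V => e ∈ G.edgeSet ∧ v ∈ e), w e :=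
    Finset.single_le_sum (fun e _ => Nat.zero_le (w e))
      (by rw [Finset.mem_filter]; exact ⟨Finset.mem_univ _, he₀, hve₀⟩)

theorem main_aux (G : SimpleGraph V) (hconn : G.Connected)
    (hn : 2 ≤ Fintype.card V)
    (w : Sym2 V → ℕ)
    (hinc : ∀ v : V, ∃ e ∈ G.edgeSet, v ∈ e ∧ w e = 1)
    (hG : NoDeg2Path3 G) :
    ∃ T : SimpleGraph V, T ≤ G ∧ T.IsTree ∧
      (Fintype.card V : ℝ) / 14 ≤
        ↑(∑ᶠ v ∈ {v : V | (T.neighborSet v).ncard = 1}, vertexWeight G w v) := by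
  classical
  obtain ⟨r, p₀, hp₀⟩ := exists_pvalid hconn
  -- maximize the potential over valid parent maps with root r
  set S : Finset (V → V) := Finset.univ.filter (fun q => PValid G r q) with hS
  have hS0 : p₀ ∈ S := by rw [hS, Finset.mem_filter]; exact ⟨Finset.mem_univ _, hp₀⟩
  obtain ⟨p, hpS, hpmax⟩ := S.exists_max_image (fun q => phiE (pedges r q)) ⟨p₀, hS0⟩
  have h : PValid G r p := (Finset.mem_filter.mp hpS).2
  have hmax : ∀ q : V → V, PValid G r q → phiE (pedges r q) ≤ phiE (pedges r p) := by
    intro q hq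
    exact hpmax q (by rw [hS, Finset.mem_filter]; exact ⟨Finset.mem_univ _, hq⟩)
  have hno7 : ∀ v : V, ¬ (∀ i ≤ 6, (ptree r p).degree (p^[i] v) = 2 ∧ p^[i] v ≠ r) :=
    fun v hchain => no7chain h hG hmax hchain
  have hcount := count14 h hn hno7
  set T : SimpleGraph V := ptree r p with hT
  refine ⟨T, ptree_le h, ptree_isTree h, ?_⟩
  -- identify the leaf set
  set Lf : Finset V := Finset.univ.filter (fun v => T.degree v = 1) with hLf
  have hsetL : {v : V | (T.neighborSet v).ncard = 1} = ↑Lf := by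
    ext v
    rw [Set.mem_setOf_eq, hLf, Finset.coe_filter]
    rw [ncard_neighborSet_eq_degree]
    simp
  rw [hsetL, finsum_mem_coe_finset]
  -- each leaf has weight at least one
  have hsum : Lf.card ≤ ∑ v ∈ Lf, vertexWeight G w v := by
    calc Lf.card = ∑ _v ∈ Lf, 1 := by simp
    _ ≤ ∑ v ∈ Lf, vertexWeight G w v :=
      Finset.sum_le_sum (fun v _ => one_le_vertexWeight w hinc v)
  -- the numeric conclusion
  rw [div_le_iff₀ (by norm_num : (0:ℝ) < 14)]
  have hfin : Fintype.card V ≤ 14 * ∑ v ∈ Lf, vertexWeight G w v := by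
    have : Fintype.card V + 13 ≤ 14 * Lf.card := hcount
    omega
  calc (Fintype.card V : ℝ) ≤ (14 * ∑ v ∈ Lf, vertexWeight G w v : ℕ) := by
        exact_mod_cast hfin
  _ = (∑ v ∈ Lf, vertexWeight G w v : ℕ) * 14 := by push_cast; ring

end CMCAux

/-- A connected graph on `n ≥ 2` vertices with 0/1 weights in which every
vertex is incident to a 1-edge and which has no path on three vertices all of degree 2
has a spanning tree whose leaf set `L` satisfies `Σ_{v ∈ L} W_G(v) ≥ n/14`. -/
theorem spanning_tree_thick_leaves {V : Type*} [Fintype V]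
    (G : SimpleGraph V) (hconn : G.Connected)
    (hn : 2 ≤ Fintype.card V)
    (w : Sym2 V → ℕ) (hw : ∀ e ∈ G.edgeSet, w e ≤ 1)
    (hinc : ∀ v : V, ∃ e ∈ G.edgeSet, v ∈ e ∧ w e = 1)
    (hG : NoDeg2Path3 G) :
    ∃ T : SimpleGraph V, T ≤ G ∧ T.IsTree ∧
      (Fintype.card V : ℝ) / 14 ≤
        ↑(∑ᶠ v ∈ {v : V | (T.neighborSet v).ncard = 1}, vertexWeight G w v) := by
  exact CMCAux.main_aux G hconn hn w hinc hG

end CMCPaper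
end

section
/- Let G = (V,E) be a connected finite simple undirected graph and let S ⊆ V be a nonempty set with G[S] connected and S ∪ N(S) ≠ V. Then there exists a vertex u ∈ N(S) \ S such that G[S ∪ {u}] is connected and |N(S ∪ {u}) \ (S ∪ {u})| ≥ |N(S) \ S|. -/
namespace CMCPaper

variable {V : Type*}

/-- If `G[S]` is connected and `S ∪ N(S) ≠ V`, then some
`u ∈ N(S) \ S` can be added to `S` keeping it connected without decreasing
`|N(S) \ S|`. -/
theorem extend_connected_set {V : Type*} [Fintype V]
    (G : SimpleGraph V) (hconn : G.Connected)
    (S : Set V) (hS : S.Nonempty) (hSc : (G.induce S).Connected)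
    (hne : S ∪ {v : V | ∃ u ∈ S, G.Adj u v} ≠ Set.univ) :
    ∃ u₀ ∈ ({v : V | ∃ u ∈ S, G.Adj u v}) \ S,
      (G.induce (S ∪ {u₀})).Connected ∧
      (({v : V | ∃ u ∈ S, G.Adj u v}) \ S).ncard ≤
        (({v : V | ∃ u ∈ S ∪ {u₀}, G.Adj u v}) \ (S ∪ {u₀})).ncard := by
  classical
  set N : Set V := {v : V | ∃ u ∈ S, G.Adj u v} with hN
  set T : Set V := S ∪ N with hT
  obtain ⟨y, hy⟩ : ∃ y, y ∉ T := by
    by_contra h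
    push_neg at h
    exact hne (Set.eq_univ_of_forall h)
  obtain ⟨s, hs⟩ := hS
  obtain ⟨p⟩ := hconn s y
  obtain ⟨d, _, hdT, hdnT⟩ := p.exists_boundary_dart T (Or.inl hs) hy
  set u := d.fst
  set z := d.snd
  have hadj : G.Adj u z := d.adj
  have huN : u ∈ N := by
    rcases hdT with h | h
    · exact absurd (Or.inr ⟨u, h, hadj⟩) hdnT
    · exact h
  have huS : u ∉ S := fun h => hdnT (Or.inr ⟨u, h, hadj⟩)
  obtain ⟨w, hwS, hwu⟩ := id huN
  refine ⟨u, ⟨huN, huS⟩, ?_, ?_⟩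
  · exact SimpleGraph.connected_induce_union hSc.preconnected
      (by simpa using (SimpleGraph.Subgraph.singletonSubgraph_connected (G := G) (v := u)).induce_verts.preconnected)
      hwS rfl hwu
  · set A : Set V := N \ S
    set B : Set V := ({v : V | ∃ x ∈ S ∪ {u}, G.Adj x v}) \ (S ∪ {u})
    have hzB : z ∈ B := by
      constructor
      · exact ⟨u, Or.inr rfl, hadj⟩
      · rintro (h | h)
        · exact hdnT (Or.inl h)
        · exact hdnT (h ▸ hdT)
    have hsub : A \ {u} ⊆ B := by
      rintro v ⟨⟨⟨x, hxS, hxv⟩, hvS⟩, hvu⟩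
      exact ⟨⟨x, Or.inl hxS, hxv⟩, by
        rintro (h | h)
        · exact hvS h
        · exact hvu h⟩
    have hzA : z ∉ A \ {u} := fun ⟨⟨hzN, _⟩, _⟩ => hdnT (Or.inr hzN)
    have hfin : B.Finite := Set.toFinite _
    have h1 : (insert z (A \ {u})).ncard ≤ B.ncard :=
      Set.ncard_le_ncard (Set.insert_subset hzB hsub) hfin
    have h2 : (insert z (A \ {u})).ncard = (A \ {u}).ncard + 1 :=
      Set.ncard_insert_of_notMem hzA (Set.toFinite _)
    have h3 : A.ncard ≤ (A \ {u}).ncard + 1 := by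
      have : A ⊆ insert u (A \ {u}) := by
        intro v hv
        by_cases h : v = u
        · exact Or.inl h
        · exact Or.inr ⟨hv, h⟩
      calc A.ncard ≤ (insert u (A \ {u})).ncard :=
            Set.ncard_le_ncard this (Set.toFinite _)
        _ ≤ (A \ {u}).ncard + 1 := Set.ncard_insert_le _ _
    omega

end CMCPaper
end

section
/- Let G = (V_G, E_G) and H = (V_H, E_H) be finite simple undirected graphs and let f : V_G → V_H be a surjection such that (i) for every a ∈ V_H, the fiber f⁻¹(a) induces a connected subgraph of G, and (ii) two distinct vertices a, b ∈ V_H are adjacent in H if and only if some edge of G joins a vertex of f⁻¹(a) to a vertex of f⁻¹(b). Call an edge of G contracted if both of its endpoints lie in the same fiber. Let S ⊆ V_G be nonempty with G[S] connected, and let S' = f(S) = {a ∈ V_H : f⁻¹(a) ∩ S ≠ ∅}. Then H[S'] is connected, and |δ_H(S')| is at least the number of edges e ∈ δ_G(S) such that neither endpoint of e is incident to a contracted edge. -/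
namespace CMCPaper

variable {V : Type*}

/-- If `H` is obtained from `G` by contracting connected fibers of a
surjection `f`, and `S` is nonempty with `G[S]` connected, then `H[f(S)]` is connected
and `|δ_H(f(S))|` is at least the number of edges of `δ_G(S)` neither of whose
endpoints is incident to a contracted edge (an edge inside a fiber). -/
theorem contraction_project {VG VH : Type*} [Fintype VG] [Fintype VH]
    (G : SimpleGraph VG) (H : SimpleGraph VH) (f : VG → VH)
    (hsurj : Function.Surjective f)
    (hfiber : ∀ a : VH, (G.induce (f ⁻¹' {a})).Connected)
    (hadj : ∀ a b : VH, a ≠ b →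
      (H.Adj a b ↔ ∃ u v : VG, f u = a ∧ f v = b ∧ G.Adj u v))
    (S : Set VG) (hS : S.Nonempty) (hSconn : (G.induce S).Connected) :
    (H.induce (f '' S)).Connected ∧
      ({e ∈ cutSet G S | ∀ u : VG, u ∈ e → ¬ ∃ x : VG, G.Adj u x ∧ f u = f x}).ncard ≤
        (cutSet H (f '' S)).ncard := by
  -- singleton fiber lemma
  have hsing : ∀ u : VG, (¬ ∃ x : VG, G.Adj u x ∧ f u = f x) →
      ∀ w : VG, f w = f u → w = u := by
    intro u hu w hw
    by_contra hne
    have hu' : u ∈ f ⁻¹' {f u} := by simp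
    have hw' : w ∈ f ⁻¹' {f u} := by simp [hw]
    obtain ⟨p⟩ := (hfiber (f u)).preconnected ⟨u, hu'⟩ ⟨w, hw'⟩
    have hnil : ¬ p.Nil := by
      apply SimpleGraph.Walk.not_nil_of_ne
      intro h
      exact hne (congrArg Subtype.val h).symm
    have hadj1 := p.adj_snd hnil
    have hGadj : G.Adj u (p.getVert 1).1 := hadj1
    have hmem : f (p.getVert 1).1 = f u := (p.getVert 1).2
    exact hu ⟨(p.getVert 1).1, hGadj, hmem.symm⟩
  constructor
  · -- connectivity of H[f '' S]
    have key : ∀ (x y : ↥S) (p : (G.induce S).Walk x y),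
        (H.induce (f '' S)).Reachable ⟨f x.1, x.1, x.2, rfl⟩ ⟨f y.1, y.1, y.2, rfl⟩ := by
      intro x y p
      induction p with
      | nil => exact SimpleGraph.Reachable.refl _
      | @cons a b c h p ih =>
        by_cases hfe : f a.1 = f b.1
        · have heq : (⟨f a.1, a.1, a.2, rfl⟩ : ↥(f '' S)) = ⟨f b.1, b.1, b.2, rfl⟩ :=
            Subtype.ext hfe
          rw [heq]; exact ih
        · refine SimpleGraph.Reachable.trans (SimpleGraph.Adj.reachable ?_) ih
          have hGadj : G.Adj a.1 b.1 := h
          exact (hadj _ _ hfe).2 ⟨a.1, b.1, rfl, rfl, hGadj⟩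
    rw [SimpleGraph.connected_iff]
    constructor
    · rintro ⟨a, u, huS, rfl⟩ ⟨b, v, hvS, rfl⟩
      obtain ⟨p⟩ := hSconn.preconnected ⟨u, huS⟩ ⟨v, hvS⟩
      exact key _ _ p
    · obtain ⟨u, huS⟩ := hS
      exact ⟨⟨f u, u, huS, rfl⟩⟩
  · -- cardinality bound
    apply Set.ncard_le_ncard_of_injOn (Sym2.map f)
    · rintro e ⟨⟨heE, u, v, rfl, huS, hvS⟩, hgood⟩
      have hu : ¬ ∃ x : VG, G.Adj u x ∧ f u = f x := hgood u (Sym2.mem_mk_left u v)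
      have hv : ¬ ∃ x : VG, G.Adj v x ∧ f v = f x := hgood v (Sym2.mem_mk_right u v)
      have hGuv : G.Adj u v := heE
      have hfne : f u ≠ f v := fun h => hu ⟨v, hGuv, h⟩
      refine ⟨(hadj _ _ hfne).2 ⟨u, v, rfl, rfl, hGuv⟩, f u, f v, by simp, ⟨u, huS, rfl⟩, ?_⟩
      rintro ⟨w, hwS, hfw⟩
      exact hvS ((hsing v hv w hfw) ▸ hwS)
    · rintro e₁ ⟨⟨h1E, u₁, v₁, rfl, hu1S, hv1S⟩, hgood₁⟩
        e₂ ⟨⟨h2E, u₂, v₂, rfl, hu2S, hv2S⟩, hgood₂⟩ heq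
      have hu₁ := hgood₁ u₁ (Sym2.mem_mk_left u₁ v₁)
      have hv₁ := hgood₁ v₁ (Sym2.mem_mk_right u₁ v₁)
      have hu₂ := hgood₂ u₂ (Sym2.mem_mk_left u₂ v₂)
      have hv₂ := hgood₂ v₂ (Sym2.mem_mk_right u₂ v₂)
      simp only [Sym2.map_pair_eq, Sym2.eq_iff] at heq
      rcases heq with ⟨h1, h2⟩ | ⟨h1, h2⟩
      · rw [hsing u₁ hu₁ u₂ h1.symm, hsing v₁ hv₁ v₂ h2.symm]
      · rw [hsing u₁ hu₁ v₂ h1.symm, hsing v₁ hv₁ u₂ h2.symm, Sym2.eq_swap]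


end CMCPaper
end
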